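/- arXiv:2409.13288 — 5 statements merged into one kernel-verified Lean document; each statement's English description precedes it below -/
import Mathlib

section
/- Let K be a field, let α₁,…,α_m ∈ ℤ^n be exponent vectors, and let c_{i,j} ∈ K for i ∈ [s], j ∈ [m]. In the Laurent polynomial ring K[x₁^±,…,x_n^±] define f_i := Σ_{j=1}^m c_{i,j} x^{α_j}, and in K[x₁^±,…,x_n^±, y₁^±,…,y_m^±] define f̂_i := Σ_{j=1}^m c_{i,j} y_j and ĝ_j := y_j − x^{α_j}. Then there is a K-algebra isomorphism K[x^±, y^±] / (⟨f̂₁,…,f̂_s⟩ + ⟨ĝ₁,…,ĝ_m⟩) ≅ K[x^±] / ⟨f₁,…,f_s⟩ sending the class of x_i to the class of x_i and the class of y_j to the class of x^{α_j}. -/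
open AddMonoidAlgebra

noncomputable section

/-- The Laurent polynomial ring in `n` variables over `R`: the group algebra of `ℤ^n`. -/
abbrev Laurent (R : Type*) [CommRing R] (n : ℕ) : Type _ :=
  AddMonoidAlgebra R (Fin n →₀ ℤ)

/-- The ring homomorphism between (Laurent) monoid algebras induced by a ring
homomorphism on the coefficients. -/
def coeffRingHom {R S : Type*} [CommRing R] [CommRing S] {G : Type*} [AddCommMonoid G]
    (f : R →+* S) : AddMonoidAlgebra R G →+* AddMonoidAlgebra S G :=
  AddMonoidAlgebra.liftNCRingHom (AddMonoidAlgebra.singleZeroRingHom.comp f)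
    (AddMonoidAlgebra.of S G) (fun _ _ => Commute.all _ _)

/-- The parametrized Laurent polynomial ring `K[a][x^±]`, with parameters indexed by `σ`. -/
abbrev Param (K : Type*) [Field K] (σ : Type*) (n : ℕ) : Type _ :=
  Laurent (MvPolynomial σ K) n

/-- The rational function field `K(a)`. -/
abbrev RatFF (K : Type*) [Field K] (σ : Type*) : Type _ :=
  FractionRing (MvPolynomial σ K)

/-- The generic specialization `I_{K(a)}` of a parametrized Laurent polynomial ideal:
the ideal generated by the image of `I` in `K(a)[x^±]`. -/
def genericSpec {K : Type*} [Field K] {σ : Type*} {n : ℕ} (I : Ideal (Param K σ n)) :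
    Ideal (Laurent (RatFF K σ) n) :=
  Ideal.map (coeffRingHom (algebraMap (MvPolynomial σ K) (RatFF K σ))) I

/-- The generic root count `ℓ_{I,K(a)} = dim_{K(a)} K(a)[x^±]/I_{K(a)}`, as a cardinal. -/
def genericRootCount {K : Type*} [Field K] {σ : Type*} {n : ℕ} (I : Ideal (Param K σ n)) :
    Cardinal :=
  Module.rank (RatFF K σ) (Laurent (RatFF K σ) n ⧸ genericSpec I)

/-- `I` is generically a complete intersection: `K(a)[x^±]/I_{K(a)}` is isomorphic, as a
`K(a)`-algebra, to a quotient `K(a)[z₁,…,z_r]/⟨f₁,…,f_k⟩` of Krull dimension `r - k`. -/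
def IsGenericCompleteIntersection {K : Type*} [Field K] {σ : Type*} {n : ℕ}
    (I : Ideal (Param K σ n)) : Prop :=
  ∃ (r k : ℕ) (f : Fin k → MvPolynomial (Fin r) (RatFF K σ)), k ≤ r ∧
    Nonempty ((Laurent (RatFF K σ) n ⧸ genericSpec I) ≃ₐ[RatFF K σ]
      (MvPolynomial (Fin r) (RatFF K σ) ⧸ Ideal.span (Set.range f))) ∧
    ringKrullDim (MvPolynomial (Fin r) (RatFF K σ) ⧸ Ideal.span (Set.range f)) = ((r - k : ℕ) : WithBot ℕ∞)

/-- The specialization `I_P` of a parametrized Laurent polynomial ideal at `P ∈ K^m`. -/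
def specialization {K : Type*} [Field K] {m n : ℕ} (I : Ideal (Param K (Fin m) n))
    (P : Fin m → K) : Ideal (Laurent K n) :=
  Ideal.map (coeffRingHom (MvPolynomial.eval P)) I

end
noncomputable section StatementThreeAux


-- test basic API
example {K : Type*} [CommSemiring K] {N : Type*} (a : N →₀ ℤ) :
    (AddMonoidAlgebra.single a 1 : AddMonoidAlgebra K (N →₀ ℤ)) = AddMonoidAlgebra.ofCoeff (Finsupp.single a 1) := rfl

/-- Two `K`-algebra homs out of a Laurent polynomial ring agreeing on the variables agree. -/
theorem laurent_algHom_ext {K : Type*} [CommSemiring K] {N : Type*} {A : Type*}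
    [CommSemiring A] [Algebra K A]
    ⦃F₁ F₂ : AddMonoidAlgebra K (N →₀ ℤ) →ₐ[K] A⦄
    (h : ∀ k : N, F₁ (single (Finsupp.single k 1) 1) = F₂ (single (Finsupp.single k 1) 1)) :
    F₁ = F₂ := by
  have hnat : ∀ (F : AddMonoidAlgebra K (N →₀ ℤ) →ₐ[K] A) (k : N) (p : ℕ),
      F (single (Finsupp.single k (p : ℤ)) 1) = F (single (Finsupp.single k 1) 1) ^ p := by
    intro F k p
    rw [← map_pow, AddMonoidAlgebra.single_pow]
    simp [Finsupp.smul_single]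
  have hsingle : ∀ (k : N) (z : ℤ),
      F₁ (single (Finsupp.single k z) 1) = F₂ (single (Finsupp.single k z) 1) := by
    intro k z
    rcases z with p | p
    · rw [Int.ofNat_eq_coe, hnat, hnat, h]
    · set w : ℤ := ((p + 1 : ℕ) : ℤ) with hw
      have hz : Int.negSucc p = -w := by rw [hw, Int.negSucc_eq]; push_cast; ring
      have hinv : ∀ (F : AddMonoidAlgebra K (N →₀ ℤ) →ₐ[K] A),
          F (single (Finsupp.single k (-w)) 1) * F (single (Finsupp.single k w) 1) = 1 := by
        intro F
        rw [← map_mul, AddMonoidAlgebra.single_mul_single]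
        simp [← Finsupp.single_add, ← AddMonoidAlgebra.one_def]
      have hB : F₁ (single (Finsupp.single k w) 1) = F₂ (single (Finsupp.single k w) 1) := by
        rw [hw, hnat, hnat, h]
      calc F₁ (single (Finsupp.single k (Int.negSucc p)) 1)
          = F₁ (single (Finsupp.single k (-w)) 1) *
            (F₂ (single (Finsupp.single k (-w)) 1) * F₂ (single (Finsupp.single k w) 1)) := by
            rw [hinv F₂, mul_one, hz]
        _ = F₂ (single (Finsupp.single k (-w)) 1) *
            (F₁ (single (Finsupp.single k (-w)) 1) * F₁ (single (Finsupp.single k w) 1)) := by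
            rw [hB]; ring
        _ = F₂ (single (Finsupp.single k (Int.negSucc p)) 1) := by rw [hinv F₁, mul_one, hz]
  apply AddMonoidAlgebra.algHom_ext
  intro e
  induction e using Finsupp.induction with
  | zero => simp [← AddMonoidAlgebra.one_def]
  | single_add k z rest hk hz ih =>
    have hsplit : (single (Finsupp.single k z + rest) 1 : AddMonoidAlgebra K (N →₀ ℤ))
        = single (Finsupp.single k z) 1 * single rest 1 := by
      rw [AddMonoidAlgebra.single_mul_single, one_mul]
    rw [hsplit, map_mul, map_mul, ih, hsingle]
  exact Subsingleton.elim _ _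

end StatementThreeAux

noncomputable section StatementThreeCore
open AddMonoidAlgebra
variable {K : Type*} [Field K] {n m : ℕ} (α : Fin m → (Fin n →₀ ℤ))

/-- exponent substitution -/
def expSub : ((Fin (n + m)) →₀ ℤ) →ₗ[ℤ] (Fin n →₀ ℤ) :=
  Finsupp.linearCombination ℤ (Fin.addCases (fun i => Finsupp.single i 1) α)

theorem expSub_x (i : Fin n) : expSub α (Finsupp.single (Fin.castAdd m i) 1) = Finsupp.single i 1 := by
  simp [expSub, Finsupp.linearCombination_single]

theorem expSub_y (j : Fin m) : expSub α (Finsupp.single (Fin.natAdd n j) 1) = α j := by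
  simp [expSub, Finsupp.linearCombination_single]

theorem expSub_mapDomain (e : Fin n →₀ ℤ) :
    expSub α (Finsupp.mapDomain (Fin.castAdd m) e) = e := by
  rw [expSub, Finsupp.linearCombination_mapDomain]
  have hc : (Fin.addCases (fun i => Finsupp.single i (1:ℤ)) α ∘ Fin.castAdd m)
      = fun i : Fin n => Finsupp.single i (1:ℤ) := by
    funext i; simp
  rw [hc]
  have : Finsupp.linearCombination ℤ (fun i : Fin n => Finsupp.single i (1:ℤ))
      = LinearMap.id := by
    apply Finsupp.lhom_ext
    intro a b
    simp [Finsupp.linearCombination_single, Finsupp.smul_single]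
  rw [this]; rfl

/-- `K[x±,y±] →ₐ K[x±]`, `x_i ↦ x_i`, `y_j ↦ x^{α j}`. -/
def downHom : Laurent K (n + m) →ₐ[K] Laurent K n :=
  AddMonoidAlgebra.lift K _ _
    ((AddMonoidAlgebra.of K (Fin n →₀ ℤ)).comp
      (AddMonoidHom.toMultiplicative (expSub α).toAddMonoidHom))

theorem downHom_single (e : (Fin (n + m)) →₀ ℤ) (r : K) :
    downHom α (single e r) = single (expSub α e) r := by
  rw [downHom, AddMonoidAlgebra.lift_single]
  simp [AddMonoidAlgebra.of_apply, AddMonoidAlgebra.smul_single']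

/-- `K[x±] →ₐ K[x±,y±]`, `x_i ↦ x_i`. -/
def upHom : Laurent K n →ₐ[K] Laurent K (n + m) :=
  AddMonoidAlgebra.lift K _ _
    ((AddMonoidAlgebra.of K ((Fin (n + m)) →₀ ℤ)).comp
      (AddMonoidHom.toMultiplicative (Finsupp.mapDomain.addMonoidHom (Fin.castAdd m))))

theorem upHom_single (e : Fin n →₀ ℤ) (r : K) :
    upHom (K := K) (n := n) (m := m) (single e r)
      = single (Finsupp.mapDomain (Fin.castAdd m) e) r := by
  rw [upHom, AddMonoidAlgebra.lift_single]
  simp [AddMonoidAlgebra.of_apply, AddMonoidAlgebra.smul_single',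
    Finsupp.mapDomain.addMonoidHom_apply]

end StatementThreeCore

/-- The algebraic core of the vertical modification: with
`f_i = Σ_j c_{i,j} x^{α_j}`, `f̂_i = Σ_j c_{i,j} y_j` and `ĝ_j = y_j − x^{α_j}`, the
quotients `K[x^±,y^±]/(⟨f̂⟩ + ⟨ĝ⟩)` and `K[x^±]/⟨f⟩` are isomorphic as `K`-algebras,
via `x_i ↦ x_i`, `y_j ↦ x^{α_j}`. -/
theorem statement3 {K : Type*} [Field K] {n m s : ℕ}
    (α : Fin m → (Fin n →₀ ℤ)) (c : Fin s → Fin m → K) :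
    let f : Fin s → Laurent K n := fun i => ∑ j, single (α j) (c i j)
    let fhat : Fin s → Laurent K (n + m) :=
      fun i => ∑ j, single (Finsupp.single (Fin.natAdd n j) 1) (c i j)
    let ghat : Fin m → Laurent K (n + m) := fun j =>
      single (Finsupp.single (Fin.natAdd n j) 1) 1
        - single (Finsupp.mapDomain (Fin.castAdd m) (α j)) 1
    let Ihat : Ideal (Laurent K (n + m)) :=
      Ideal.span (Set.range fhat) + Ideal.span (Set.range ghat)
    let I : Ideal (Laurent K n) := Ideal.span (Set.range f)
    ∃ e : (Laurent K (n + m) ⧸ Ihat) ≃ₐ[K] (Laurent K n ⧸ I),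
      (∀ i : Fin n,
        e (Ideal.Quotient.mk Ihat (single (Finsupp.single (Fin.castAdd m i) 1) 1))
          = Ideal.Quotient.mk I (single (Finsupp.single i 1) 1)) ∧
      (∀ j : Fin m,
        e (Ideal.Quotient.mk Ihat (single (Finsupp.single (Fin.natAdd n j) 1) 1))
          = Ideal.Quotient.mk I (single (α j) 1)) := by
  intro f fhat ghat Ihat I
  classical
  have hf_def : ∀ i, f i = ∑ j, single (α j) (c i j) := fun _ => rfl
  have hfhat_def : ∀ i, fhat i = ∑ j, single (Finsupp.single (Fin.natAdd n j) 1) (c i j) :=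
    fun _ => rfl
  have hghat_def : ∀ j, ghat j = single (Finsupp.single (Fin.natAdd n j) 1) 1
      - single (Finsupp.mapDomain (Fin.castAdd m) (α j)) 1 := fun _ => rfl
  have hIhat_def : Ihat = Ideal.span (Set.range fhat) + Ideal.span (Set.range ghat) := rfl
  have hI_def : I = Ideal.span (Set.range f) := rfl
  -- the downward map kills Ihat
  have hfhat_im : ∀ i, downHom α (fhat i) = f i := by
    intro i
    rw [hfhat_def, hf_def, map_sum]
    exact Finset.sum_congr rfl fun j _ => by rw [downHom_single, expSub_y]
  have hghat_im : ∀ j, downHom α (ghat j) = 0 := by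
    intro j
    rw [hghat_def, map_sub, downHom_single, downHom_single, expSub_y, expSub_mapDomain, sub_self]
  have hdown0 : ∀ a ∈ Ihat, ((Ideal.Quotient.mkₐ K I).comp (downHom α)) a = 0 := by
    have hle : Ihat ≤ RingHom.ker ((Ideal.Quotient.mkₐ K I).comp (downHom α)) := by
      rw [hIhat_def]
      apply sup_le
      · rw [Ideal.span_le]
        rintro _ ⟨i, rfl⟩
        simp only [SetLike.mem_coe, RingHom.mem_ker, AlgHom.comp_apply, hfhat_im,
          Ideal.Quotient.mkₐ_eq_mk, Ideal.Quotient.eq_zero_iff_mem, hI_def]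
        exact Ideal.subset_span ⟨i, rfl⟩
      · rw [Ideal.span_le]
        rintro _ ⟨j, rfl⟩
        simp only [SetLike.mem_coe, RingHom.mem_ker, AlgHom.comp_apply, hghat_im, map_zero]
    exact fun a ha => hle ha
  set φ : (Laurent K (n + m) ⧸ Ihat) →ₐ[K] (Laurent K n ⧸ I) :=
    Ideal.Quotient.liftₐ Ihat ((Ideal.Quotient.mkₐ K I).comp (downHom α)) hdown0 with hφ
  have hφmk : ∀ a, φ (Ideal.Quotient.mk Ihat a) = Ideal.Quotient.mk I (downHom α a) := by
    intro a
    rw [hφ, Ideal.Quotient.liftₐ_apply]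
    rfl
  -- the key congruence from ghat
  have hy : ∀ j : Fin m,
      Ideal.Quotient.mk Ihat (single (Finsupp.mapDomain (Fin.castAdd m) (α j)) (1 : K))
        = Ideal.Quotient.mk Ihat (single (Finsupp.single (Fin.natAdd n j) 1) 1) := by
    intro j
    rw [Ideal.Quotient.eq]
    have : (single (Finsupp.mapDomain (Fin.castAdd m) (α j)) (1 : K) : Laurent K (n + m))
        - single (Finsupp.single (Fin.natAdd n j) 1) 1 = -(ghat j) := by
      rw [hghat_def, neg_sub]
    rw [this, hIhat_def]
    exact neg_mem (Ideal.mem_sup_right (Ideal.subset_span ⟨j, rfl⟩))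
  have hsplit : ∀ (e : (Fin (n + m)) →₀ ℤ) (r : K),
      (single e r : Laurent K (n + m)) = single 0 r * single e 1 := by
    intro e r
    rw [AddMonoidAlgebra.single_mul_single, zero_add, mul_one]
  have hy' : ∀ (j : Fin m) (r : K),
      Ideal.Quotient.mk Ihat (single (Finsupp.mapDomain (Fin.castAdd m) (α j)) r)
        = Ideal.Quotient.mk Ihat (single (Finsupp.single (Fin.natAdd n j) 1) r) := by
    intro j r
    rw [hsplit, map_mul, hy, ← map_mul, ← hsplit]
  -- the upward map kills I
  have hup0 : ∀ a ∈ I, ((Ideal.Quotient.mkₐ K Ihat).comp upHom) a = 0 := by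
    have hle : I ≤ RingHom.ker ((Ideal.Quotient.mkₐ K Ihat).comp upHom) := by
      rw [hI_def, Ideal.span_le]
      rintro _ ⟨i, rfl⟩
      have him : ((Ideal.Quotient.mkₐ K Ihat).comp upHom) (f i)
          = Ideal.Quotient.mk Ihat (fhat i) := by
        rw [hf_def, hfhat_def, AlgHom.comp_apply, Ideal.Quotient.mkₐ_eq_mk]
        simp only [map_sum]
        exact Finset.sum_congr rfl fun j _ => by rw [upHom_single, hy' j (c i j)]
      simp only [SetLike.mem_coe, RingHom.mem_ker, him, Ideal.Quotient.eq_zero_iff_mem, hIhat_def]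
      exact Ideal.mem_sup_left (Ideal.subset_span ⟨i, rfl⟩)
    exact fun a ha => hle ha
  set ψ : (Laurent K n ⧸ I) →ₐ[K] (Laurent K (n + m) ⧸ Ihat) :=
    Ideal.Quotient.liftₐ I ((Ideal.Quotient.mkₐ K Ihat).comp upHom) hup0 with hψ
  have hψmk : ∀ a, ψ (Ideal.Quotient.mk I a) = Ideal.Quotient.mk Ihat (upHom a) := by
    intro a
    rw [hψ, Ideal.Quotient.liftₐ_apply]
    rfl
  have h1 : φ.comp ψ = AlgHom.id K (Laurent K n ⧸ I) := by
    apply Ideal.Quotient.algHom_ext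
    apply AddMonoidAlgebra.algHom_ext
    intro e
    simp only [AlgHom.comp_apply, Ideal.Quotient.mkₐ_eq_mk, AlgHom.id_apply]
    rw [hψmk, upHom_single, hφmk, downHom_single, expSub_mapDomain]
    exact Subsingleton.elim _ _
  have h2 : ψ.comp φ = AlgHom.id K (Laurent K (n + m) ⧸ Ihat) := by
    apply Ideal.Quotient.algHom_ext
    apply laurent_algHom_ext
    intro k
    simp only [AlgHom.comp_apply, Ideal.Quotient.mkₐ_eq_mk, AlgHom.id_apply]
    rw [hφmk, downHom_single]
    induction k using Fin.addCases with
    | left i =>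
      rw [expSub_x, hψmk, upHom_single, Finsupp.mapDomain_single]
    | right j =>
      rw [expSub_y, hψmk, upHom_single, hy' j 1]
  refine ⟨AlgEquiv.ofAlgHom φ ψ h1 h2, ?_, ?_⟩
  · intro i
    show φ (Ideal.Quotient.mk Ihat (single (Finsupp.single (Fin.castAdd m i) 1) 1)) = _
    rw [hφmk, downHom_single, expSub_x]
  · intro j
    show φ (Ideal.Quotient.mk Ihat (single (Finsupp.single (Fin.natAdd n j) 1) 1)) = _
    rw [hφmk, downHom_single, expSub_y]
end

section
/- Let K be an algebraically closed field of characteristic 0 and let I be an ideal of the Laurent polynomial ring K[x₁^±,…,x_n^±] that is generated by a set of binomials, i.e., by Laurent polynomials each of which has at most two nonzero terms (its support, as a finitely supported function ℤ^n → K, has at most two elements). Then I is a radical ideal. -/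
open AddMonoidAlgebra

namespace Statement7Aux
set_option linter.unusedSectionVars false


section Chars
variable {K : Type*} [Field K] [IsAlgClosed K] [CharZero K]

noncomputable instance unitsRootableNat : RootableBy Kˣ ℕ :=
  rootableByOfPowLeftSurj _ _ (by
    intro n hn u
    obtain ⟨z, hz⟩ := IsAlgClosed.exists_pow_nat_eq (u : K) (Nat.pos_of_ne_zero hn)
    have hz0 : z ≠ 0 := by
      intro h; rw [h, zero_pow hn] at hz; exact (Units.ne_zero u) hz.symm
    exact ⟨Units.mk0 z hz0, Units.ext (by simp [hz])⟩)

noncomputable instance unitsRootableInt : RootableBy Kˣ ℤ :=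
  Group.rootableByIntOfRootableByNat Kˣ

noncomputable instance addUnitsDivisible : DivisibleBy (Additive Kˣ) ℤ where
  div a n := Additive.ofMul (RootableBy.root (Additive.toMul a) n)
  div_zero a := congrArg Additive.ofMul (RootableBy.root_zero (Additive.toMul a))
  div_cancel a hn := congrArg Additive.ofMul (RootableBy.root_cancel (Additive.toMul a) hn)

/-- Extension of characters on subgroups, using divisibility of `Kˣ`. -/
theorem exists_char_extension {Q : Type*} [AddCommGroup Q] (H : AddSubgroup Q)
    (χ : H →+ Additive Kˣ) : ∃ ψ : Q →+ Additive Kˣ, ∀ h : H, ψ h = χ h := by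
  obtain ⟨ψ, hψ⟩ := (Module.Baer.of_divisible (Additive Kˣ)).extension_property_addMonoidHom
    H.subtype H.subtype_injective χ
  exact ⟨ψ, fun h => by rw [← hψ]; rfl⟩

/-- a nontrivial `m`-th root of unity for `m ≥ 2`. -/
theorem exists_root_of_unity {m : ℕ} (hm : 2 ≤ m) : ∃ ζ : Kˣ, ζ ^ m = 1 ∧ ζ ≠ 1 := by
  have : NeZero m := ⟨by omega⟩
  obtain ⟨z, hz⟩ := IsAlgClosed.exists_root (Polynomial.cyclotomic m K) (by
    rw [Polynomial.degree_cyclotomic]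
    exact_mod_cast (Nat.totient_pos.mpr (by omega)).ne')
  have hprim : IsPrimitiveRoot z m := (Polynomial.isRoot_cyclotomic_iff).mp hz
  have hz0 : z ≠ 0 := fun h => by
    have := hprim.pow_eq_one; rw [h, zero_pow (by omega)] at this; exact zero_ne_one this
  refine ⟨Units.mk0 z hz0, Units.ext (by simp [hprim.pow_eq_one]), fun h => ?_⟩
  have hz1 : z = 1 := by simpa using congrArg (Units.val) h
  have := hprim.eq_orderOf
  rw [hz1, orderOf_one] at this
  omega
end Chars
section Chars
variable {K : Type*} [Field K] [IsAlgClosed K] [CharZero K]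



/-- Characters into `Kˣ` separate points of any abelian group. -/
theorem exists_char_ne (Q : Type*) [AddCommGroup Q] {c : Q} (hc : c ≠ 0) :
    ∃ ψ : Q →+ Additive Kˣ, ψ c ≠ 0 := by
  classical
  set f : ℤ →+ Q := zmultiplesHom Q c with hf
  obtain ⟨d, hd⟩ := Int.subgroup_cyclic f.ker
  have hsep : ∃ u : Additive Kˣ, u ≠ 0 ∧ ∀ k : ℤ, k ∈ f.ker → k • u = 0 := by
    rcases eq_or_ne d 0 with rfl | hd0
    · refine ⟨Additive.ofMul (Units.mk0 (2:K) two_ne_zero), ?_, ?_⟩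
      · intro h
        have : ((2:K)) = 1 := by
          have := congrArg (fun x => ((Additive.toMul x : Kˣ) : K)) h
          simpa using this
        norm_num at this
      · intro k hk
        rw [hd, AddSubgroup.mem_closure_singleton] at hk
        obtain ⟨j, hj⟩ := hk
        simp only [smul_zero] at hj
        rw [← hj, zero_smul]
    · set m := d.natAbs with hm
      have hm1 : 1 ≤ m := by omega
      rcases eq_or_lt_of_le hm1 with h1 | h2
      · exfalso
        have h1' : (1 : ℤ) ∈ f.ker := by
          rw [hd, AddSubgroup.mem_closure_singleton]
          rcases Int.natAbs_eq_iff.mp h1.symm with h | h <;>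
            exact ⟨d, by simp [h, smul_eq_mul]⟩
        have : f 1 = 0 := h1'
        rw [hf] at this
        simp [zmultiplesHom_apply] at this
        exact hc this
      · obtain ⟨ζ, hζm, hζ1⟩ := exists_root_of_unity (K := K) (m := m) (by omega)
        refine ⟨Additive.ofMul ζ, fun h => hζ1 (by simpa using congrArg Additive.toMul h), ?_⟩
        intro k hk
        rw [hd, AddSubgroup.mem_closure_singleton] at hk
        obtain ⟨j, hj⟩ := hk
        have hζd : ζ ^ d = 1 := by
          rcases Int.natAbs_eq d with h | h
          · rw [h, zpow_natCast, ← hm, hζm]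
          · rw [h, zpow_neg, zpow_natCast, ← hm, hζm, inv_one]
        have hζk : ζ ^ k = 1 := by
          rw [← hj]
          show ζ ^ (j • d) = 1
          rw [smul_eq_mul, mul_comm, zpow_mul, hζd, one_zpow]
        have h' : k • Additive.ofMul ζ = Additive.ofMul (ζ ^ k) := rfl
        rw [h', hζk]
        rfl
  obtain ⟨u, hu0, hu⟩ := hsep
  set g : ℤ →+ Additive Kˣ := zmultiplesHom _ u with hg
  have hker : ∀ k ∈ f.ker, g k = 0 := by
    intro k hk; exact hu k hk
  set χ' : ℤ ⧸ f.ker →+ Additive Kˣ := QuotientAddGroup.lift f.ker g hker with hχ'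
  set e : ℤ ⧸ f.ker ≃+ f.range := QuotientAddGroup.quotientKerEquivRange f with he
  have hmem : c ∈ f.range := ⟨1, by simp [hf, zmultiplesHom_apply]⟩
  obtain ⟨ψ, hψ⟩ := exists_char_extension f.range (χ'.comp e.symm.toAddMonoidHom)
  refine ⟨ψ, ?_⟩
  have h1 : e ((1 : ℤ) : ℤ ⧸ f.ker) = ⟨c, hmem⟩ := by
    apply Subtype.ext
    show f 1 = c
    simp [hf, zmultiplesHom_apply]
  have hc' := hψ ⟨c, hmem⟩
  rw [hc']
  show χ' (e.symm ⟨c, hmem⟩) ≠ 0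
  rw [← h1, AddEquiv.symm_apply_apply]
  show g 1 ≠ 0
  simpa [hg, zmultiplesHom_apply] using hu0
end Chars
section Red
variable {K : Type*} [Field K] [IsAlgClosed K] [CharZero K]



variable (K) in
/-- A character as a multiplicative map to `K`. -/
def charMul {Q : Type*} [AddCommGroup Q] (ψ : Q →+ Additive Kˣ) : Multiplicative Q →* K where
  toFun q := ((Additive.toMul (ψ q.toAdd) : Kˣ) : K)
  map_one' := by simp only [toAdd_one, map_zero, toMul_zero, Units.val_one]
  map_mul' a b := by simp only [toAdd_mul, map_add, toMul_add, Units.val_mul]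

theorem isReduced_groupAlgebra (Q : Type*) [AddCommGroup Q] :
    IsReduced (AddMonoidAlgebra K Q) := by
  classical
  constructor
  rintro p ⟨N, hN⟩
  -- evaluation of all characters at p vanishes
  have hev : ∀ ψ : Q →+ Additive Kˣ, AddMonoidAlgebra.lift K K Q (charMul K ψ) p = 0 := by
    intro ψ
    have hN0 : N ≠ 0 := by
      rintro rfl
      rw [pow_zero] at hN
      exact one_ne_zero hN
    have : (AddMonoidAlgebra.lift K K Q (charMul K ψ) p) ^ N = 0 := by
      rw [← map_pow, hN, map_zero]
    exact pow_eq_zero_iff hN0 |>.mp this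
  -- the evaluation maps, as monoid homs on the monoid of characters
  let M := Multiplicative (Q →+ Additive Kˣ)
  have hv : ∀ q : Q, ∃ e : M →* K, ∀ ψ : Q →+ Additive Kˣ,
      e (Multiplicative.ofAdd ψ) = ((Additive.toMul (ψ q) : Kˣ) : K) := by
    intro q
    refine ⟨{ toFun := fun ψ => ((Additive.toMul (ψ.toAdd q) : Kˣ) : K),
              map_one' := by
                simp only [toAdd_one, AddMonoidHom.zero_apply, toMul_zero, Units.val_one],
              map_mul' := fun a b => rfl },
            fun ψ => rfl⟩
  choose e he using hv
  have hinj : Function.Injective e := by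
    intro q q' h
    by_contra hne
    obtain ⟨ψ, hψ⟩ := exists_char_ne (K := K) Q (c := q - q') (sub_ne_zero.mpr hne)
    apply hψ
    have := congrArg (fun f : M →* K => f (Multiplicative.ofAdd ψ)) h
    simp only [he] at this
    have hu : Additive.toMul (ψ q) = Additive.toMul (ψ q') := Units.ext this
    have : ψ q = ψ q' := hu
    rw [map_sub, this, sub_self]
  have hli : LinearIndependent K (fun q : Q => ⇑(e q)) :=
    (linearIndependent_monoidHom M K).comp e hinj
  -- now the sum over the support of p of p q • e q is the zero function
  have hsum : ∑ q ∈ p.coeff.support, p.coeff q • ⇑(e q) = 0 := by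
    funext ψ
    have := hev ψ.toAdd
    rw [AddMonoidAlgebra.lift_apply] at this
    simp only [Finsupp.sum] at this
    have h2 : ∀ x, (e x) ψ = ((Additive.toMul ((Multiplicative.toAdd ψ) x) : Kˣ) : K) :=
      fun x => he x (Multiplicative.toAdd ψ)
    simpa [charMul, Finset.sum_apply, h2] using this
  ext q
  by_cases hq : q ∈ p.coeff.support
  · exact linearIndependent_iff'.mp hli p.coeff.support p.coeff hsum q hq
  · simpa using Finsupp.notMem_support_iff.mp hq
end Red
section Ker
variable {K : Type*} [Field K] {G : Type*} [AddCommGroup G]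

/-- The "lattice ideal" of a subgroup `L`, with trivial character. -/
noncomputable def latticeIdeal (K : Type*) [Field K] {G : Type*} [AddCommGroup G] (L : AddSubgroup G) :
    Ideal (AddMonoidAlgebra K G) :=
  Ideal.span ((fun γ : G => (AddMonoidAlgebra.single γ (1:K) - AddMonoidAlgebra.single 0 1)) ''
    (L : Set G))

theorem latticeIdeal_eq_ker (L : AddSubgroup G) :
    latticeIdeal K L =
      RingHom.ker (AddMonoidAlgebra.mapDomainRingHom K (QuotientAddGroup.mk' L)) := by
  classical
  set π := QuotientAddGroup.mk' L with hπ
  set F := AddMonoidAlgebra.mapDomainRingHom K π with hF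
  have hFapp : ∀ h : AddMonoidAlgebra K G, F h = AddMonoidAlgebra.mapDomain π h := fun h => rfl
  apply le_antisymm
  · rw [latticeIdeal, Ideal.span_le]
    rintro x ⟨γ, hγ, rfl⟩
    rw [SetLike.mem_coe, RingHom.mem_ker, map_sub, hFapp, hFapp,
      AddMonoidAlgebra.mapDomain_single, AddMonoidAlgebra.mapDomain_single]
    have : π γ = π 0 := by
      rw [map_zero]
      exact (QuotientAddGroup.eq_zero_iff γ).mpr hγ
    rw [this, sub_self]
  · intro h hh
    rw [RingHom.mem_ker] at hh
    generalize hn : h.coeff.support.card = nn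
    induction nn using Nat.strong_induction_on generalizing h with
    | _ nn ih =>
    rcases eq_or_ne h 0 with rfl | hne
    · exact Ideal.zero_mem _
    -- pick a in the support
    obtain ⟨a, ha⟩ := Finsupp.support_nonempty_iff.mpr (by intro h0; apply hne; exact AddMonoidAlgebra.coeff_injective h0)
    -- the fiber sum over π a is zero
    have hcoef : ∑ b ∈ h.coeff.support.filter (fun b => π b = π a), h.coeff b = 0 := by
      have h0 : (Finsupp.mapDomain π h.coeff) (π a) = 0 := by
        have := congrArg (fun x => x.coeff (π a)) hh; exact this
      rw [Finsupp.mapDomain, Finsupp.sum, Finsupp.finset_sum_apply] at h0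
      simp only [Finsupp.single_apply] at h0
      rw [Finset.sum_filter]
      exact h0
    -- find a second element of the fiber
    have hex : ∃ b ∈ h.coeff.support, b ≠ a ∧ π b = π a := by
      by_contra hcon
      push_neg at hcon
      have hT : h.coeff.support.filter (fun b => π b = π a) = {a} := by
        apply Finset.eq_singleton_iff_unique_mem.mpr
        refine ⟨Finset.mem_filter.mpr ⟨ha, rfl⟩, ?_⟩
        intro x hx
        rcases Finset.mem_filter.mp hx with ⟨hx1, hx2⟩
        by_contra hxa
        exact hcon x hx1 hxa hx2
      rw [hT, Finset.sum_singleton] at hcoef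
      exact Finsupp.mem_support_iff.mp ha hcoef
    obtain ⟨b, hbsupp, hba, hπb⟩ := hex
    set g : AddMonoidAlgebra K G := AddMonoidAlgebra.single a (h.coeff a) -
      AddMonoidAlgebra.single b (h.coeff a) with hg
    have hgmem : g ∈ latticeIdeal K L := by
      have hab : a - b ∈ L := by
        have : π (a - b) = 0 := by rw [map_sub, hπb, sub_self]
        exact (QuotientAddGroup.eq_zero_iff _).mp this
      have hfactor : g = AddMonoidAlgebra.single b (h.coeff a) *
          (AddMonoidAlgebra.single (a - b) (1:K) - AddMonoidAlgebra.single 0 1) := by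
        rw [hg, mul_sub, AddMonoidAlgebra.single_mul_single, AddMonoidAlgebra.single_mul_single]
        simp [add_sub_cancel]
      rw [hfactor]
      exact Ideal.mul_mem_left _ _ (Ideal.subset_span ⟨a - b, hab, rfl⟩)
    have hFg : F g = 0 := by
      rw [hg, map_sub, hFapp, hFapp, AddMonoidAlgebra.mapDomain_single, AddMonoidAlgebra.mapDomain_single,
        hπb, sub_self]
    set h' := h - g with hh'
    have hFh' : F h' = 0 := by rw [hh', map_sub, hh, hFg, sub_self]
    have hsupp : h'.coeff.support ⊆ h.coeff.support \ {a} := by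
      intro x hx
      rw [Finsupp.mem_support_iff] at hx
      have hvals : h'.coeff x = h.coeff x - (Finsupp.single a (h.coeff a)) x +
          (Finsupp.single b (h.coeff a)) x := by
        rw [hh', hg, AddMonoidAlgebra.coeff_sub, AddMonoidAlgebra.coeff_sub, Finsupp.sub_apply,
          Finsupp.sub_apply, AddMonoidAlgebra.coeff_single, AddMonoidAlgebra.coeff_single]; ring
      rw [Finset.mem_sdiff, Finset.mem_singleton]
      rcases eq_or_ne x a with rfl | hxa
      · exfalso
        apply hx
        rw [hvals, Finsupp.single_apply, Finsupp.single_apply, if_pos rfl, if_neg hba]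
        ring
      · refine ⟨?_, hxa⟩
        rw [Finsupp.mem_support_iff]
        intro hhx
        apply hx
        rcases eq_or_ne x b with rfl | hxb
        · exact absurd hhx (Finsupp.mem_support_iff.mp hbsupp)
        · rw [hvals, hhx, Finsupp.single_apply, Finsupp.single_apply,
            if_neg (fun hh => hxa hh.symm), if_neg (fun hh => hxb hh.symm)]
          ring
    have hcard : h'.coeff.support.card < nn := by
      calc h'.coeff.support.card ≤ (h.coeff.support \ {a}).card := Finset.card_le_card hsupp
        _ < h.coeff.support.card := by
            apply Finset.card_lt_card
            constructor
            · exact Finset.sdiff_subset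
            · intro hsub
              exact (Finset.mem_sdiff.mp (hsub ha)).2 (Finset.mem_singleton_self a)
        _ = nn := hn
    have hmem' : h' ∈ latticeIdeal K L := ih _ hcard hFh' rfl
    have : h = h' + g := by rw [hh']; ring
    rw [this]
    exact Ideal.add_mem _ hmem' hgmem
end Ker
section Twist
variable {K : Type*} [Field K] {G : Type*} [AddCommGroup G]




/-- The twisting algebra homomorphism associated to a character. -/
noncomputable def twist (ρ : G →+ Additive Kˣ) :
    AddMonoidAlgebra K G →ₐ[K] AddMonoidAlgebra K G :=
  AddMonoidAlgebra.lift K _ G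
  { toFun := fun a => AddMonoidAlgebra.single a.toAdd
        ((Additive.toMul (ρ a.toAdd) : Kˣ) : K),
      map_one' := by
        simp only [toAdd_one, map_zero, toMul_zero, Units.val_one]
        rfl,
      map_mul' := fun a b => by
        simp only [toAdd_mul, map_add, toMul_add, Units.val_mul,
          AddMonoidAlgebra.single_mul_single] }

theorem twist_single (ρ : G →+ Additive Kˣ) (a : G) (k : K) :
    twist ρ (AddMonoidAlgebra.single a k) =
      AddMonoidAlgebra.single a (k * ((Additive.toMul (ρ a) : Kˣ) : K)) := by
  rw [twist, AddMonoidAlgebra.lift_single]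
  simp [Finsupp.smul_single, smul_eq_mul]

/-- twisting is an algebra equivalence. -/
noncomputable def twistEquiv (ρ : G →+ Additive Kˣ) :
    AddMonoidAlgebra K G ≃ₐ[K] AddMonoidAlgebra K G := by
  refine AlgEquiv.ofAlgHom (twist ρ) (twist (-ρ)) ?_ ?_ <;>
  · refine AddMonoidAlgebra.algHom_ext ?_ (Subsingleton.elim _ _)
    intro a
    simp only [AlgHom.coe_comp, Function.comp_apply, twist_single, one_mul, AlgHom.coe_id,
      id_eq, AddMonoidHom.neg_apply, toMul_neg, Units.val_inv_eq_inv_val]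
    congr 1
    field_simp

theorem twistEquiv_apply (ρ : G →+ Additive Kˣ) (a : G) (k : K) :
    twistEquiv ρ (AddMonoidAlgebra.single a k) =
      AddMonoidAlgebra.single a (k * ((Additive.toMul (ρ a) : Kˣ) : K)) :=
  twist_single ρ a k

/-- The main radicality lemma for lattice ideals with a character. -/
theorem latticeIdealChar_isRadical {K : Type*} [Field K] [IsAlgClosed K] [CharZero K]
    {G : Type*} [AddCommGroup G] (L : AddSubgroup G) (ρ : L →+ Additive Kˣ) :
    (Ideal.span (Set.range (fun γ : L => AddMonoidAlgebra.single (γ:G) (1:K) -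
      AddMonoidAlgebra.single 0 ((Additive.toMul (ρ γ) : Kˣ) : K)))).IsRadical := by
  classical
  obtain ⟨ρ', hρ'⟩ := exists_char_extension L ρ
  set φ := twistEquiv (K := K) ρ' with hφ
  set J := Ideal.span (Set.range (fun γ : L => AddMonoidAlgebra.single (γ:G) (1:K) -
      AddMonoidAlgebra.single 0 ((Additive.toMul (ρ γ) : Kˣ) : K))) with hJ
  -- the lattice ideal is radical, being the kernel of a map to a reduced ring
  have hrad : (latticeIdeal K L).IsRadical := by
    rw [latticeIdeal_eq_ker]
    intro r hr
    obtain ⟨N, hN⟩ := hr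
    rw [RingHom.mem_ker] at hN ⊢
    rw [map_pow] at hN
    exact (isReduced_groupAlgebra (K := K) (G ⧸ L)).eq_zero _ ⟨N, hN⟩
  -- the twist moves J to the lattice ideal
  have hmap : Ideal.map (φ : AddMonoidAlgebra K G →+* AddMonoidAlgebra K G) J
      = latticeIdeal K L := by
    rw [hJ, Ideal.map_span, latticeIdeal]
    apply le_antisymm <;> rw [Ideal.span_le]
    · rintro x ⟨y, ⟨γ, rfl⟩, rfl⟩
      have hval : ((Additive.toMul (ρ' (γ:G)) : Kˣ) : K) = ((Additive.toMul (ρ γ) : Kˣ) : K) := by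
        rw [hρ' γ]
      set c : K := ((Additive.toMul (ρ γ) : Kˣ) : K) with hc
      have himg : (φ : AddMonoidAlgebra K G →+* AddMonoidAlgebra K G)
          ((AddMonoidAlgebra.single (γ:G) (1:K)) - AddMonoidAlgebra.single 0 c)
          = AddMonoidAlgebra.single (0:G) c *
            (AddMonoidAlgebra.single (γ:G) (1:K) - AddMonoidAlgebra.single 0 1) := by
        rw [map_sub]
        show φ _ - φ _ = _
        rw [twistEquiv_apply, twistEquiv_apply, hval, map_zero]
        rw [mul_sub, AddMonoidAlgebra.single_mul_single, AddMonoidAlgebra.single_mul_single]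
        simp [hc]
      rw [himg]
      exact Ideal.mul_mem_left _ _ (Ideal.subset_span ⟨(γ:G), γ.2, rfl⟩)
    · rintro x ⟨γ, hγ, rfl⟩
      set c : K := ((Additive.toMul (ρ ⟨γ, hγ⟩) : Kˣ) : K) with hc
      have hc0 : c ≠ 0 := Units.ne_zero _
      have hval : ((Additive.toMul (ρ' γ) : Kˣ) : K) = c := by rw [hρ' ⟨γ, hγ⟩]
      have himg : (φ : AddMonoidAlgebra K G →+* AddMonoidAlgebra K G)
          ((AddMonoidAlgebra.single γ (1:K)) - AddMonoidAlgebra.single 0 c)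
          = AddMonoidAlgebra.single (0:G) c *
            (AddMonoidAlgebra.single γ (1:K) - AddMonoidAlgebra.single 0 1) := by
        rw [map_sub]
        show φ _ - φ _ = _
        rw [twistEquiv_apply, twistEquiv_apply, hval, map_zero]
        rw [mul_sub, AddMonoidAlgebra.single_mul_single, AddMonoidAlgebra.single_mul_single]
        simp
      have hone : (AddMonoidAlgebra.single (0:G) (c⁻¹ * c)) = (1 : AddMonoidAlgebra K G) := by
        rw [inv_mul_cancel₀ hc0]
        rfl
      have hx : AddMonoidAlgebra.single γ (1:K) - AddMonoidAlgebra.single 0 1 =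
          AddMonoidAlgebra.single (0:G) c⁻¹ *
            ((φ : AddMonoidAlgebra K G →+* AddMonoidAlgebra K G)
              ((AddMonoidAlgebra.single γ (1:K)) - AddMonoidAlgebra.single 0 c)) := by
        rw [himg, ← mul_assoc, AddMonoidAlgebra.single_mul_single, zero_add, hone, one_mul]
      show AddMonoidAlgebra.single γ (1:K) - AddMonoidAlgebra.single 0 1 ∈ _
      rw [hx]
      refine Ideal.mul_mem_left _ _ (Ideal.subset_span ?_)
      exact ⟨_, ⟨⟨γ, hγ⟩, rfl⟩, rfl⟩
  have hcm : J = Ideal.comap (φ : AddMonoidAlgebra K G →+* AddMonoidAlgebra K G)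
      (latticeIdeal K L) := by
    rw [← hmap]
    exact (Ideal.comap_map_of_bijective _ φ.bijective).symm
  rw [hcm]
  exact Ideal.IsRadical.comap _ hrad
end Twist
section Assemble
variable {K : Type*} [Field K] {G : Type*} [AddCommGroup G]



theorem isUnit_single (a : G) {c : K} (hc : c ≠ 0) :
    IsUnit (AddMonoidAlgebra.single a c) := by
  refine ⟨⟨AddMonoidAlgebra.single a c, AddMonoidAlgebra.single (-a) c⁻¹, ?_, ?_⟩, rfl⟩
  · rw [AddMonoidAlgebra.single_mul_single, add_neg_cancel, mul_inv_cancel₀ hc]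
    rfl
  · rw [AddMonoidAlgebra.single_mul_single, neg_add_cancel, inv_mul_cancel₀ hc]
    rfl

theorem binAdd (I : Ideal (AddMonoidAlgebra K G)) {γ δ : G} {c d : K}
    (hc : AddMonoidAlgebra.single γ (1:K) - AddMonoidAlgebra.single 0 c ∈ I)
    (hd : AddMonoidAlgebra.single δ (1:K) - AddMonoidAlgebra.single 0 d ∈ I) :
    AddMonoidAlgebra.single (γ + δ) (1:K) - AddMonoidAlgebra.single 0 (c * d) ∈ I := by
  have key : AddMonoidAlgebra.single δ (1:K) *
      (AddMonoidAlgebra.single γ (1:K) - AddMonoidAlgebra.single 0 c) +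
      AddMonoidAlgebra.single (0:G) c *
      (AddMonoidAlgebra.single δ (1:K) - AddMonoidAlgebra.single 0 d) =
      AddMonoidAlgebra.single (γ + δ) (1:K) - AddMonoidAlgebra.single 0 (c * d) := by
    rw [mul_sub, mul_sub, AddMonoidAlgebra.single_mul_single,
      AddMonoidAlgebra.single_mul_single, AddMonoidAlgebra.single_mul_single,
      AddMonoidAlgebra.single_mul_single]
    simp only [zero_add, add_zero, one_mul, mul_one]
    rw [add_comm δ γ, sub_add_sub_cancel]
  rw [← key]
  exact Ideal.add_mem _ (Ideal.mul_mem_left _ _ hc) (Ideal.mul_mem_left _ _ hd)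

theorem binNeg (I : Ideal (AddMonoidAlgebra K G)) {γ : G} {c : K} (hc0 : c ≠ 0)
    (hc : AddMonoidAlgebra.single γ (1:K) - AddMonoidAlgebra.single 0 c ∈ I) :
    AddMonoidAlgebra.single (-γ) (1:K) - AddMonoidAlgebra.single 0 c⁻¹ ∈ I := by
  have key : (-(AddMonoidAlgebra.single (-γ) c⁻¹)) *
      (AddMonoidAlgebra.single γ (1:K) - AddMonoidAlgebra.single 0 c) =
      AddMonoidAlgebra.single (-γ) (1:K) - AddMonoidAlgebra.single 0 c⁻¹ := by
    rw [neg_mul, mul_sub, AddMonoidAlgebra.single_mul_single,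
      AddMonoidAlgebra.single_mul_single, neg_sub, neg_add_cancel, add_zero, mul_one,
      inv_mul_cancel₀ hc0]
  rw [← key]
  exact Ideal.mul_mem_left _ _ hc

theorem binUniq (I : Ideal (AddMonoidAlgebra K G)) (hI : I ≠ ⊤) {γ : G} {c d : K}
    (hc : AddMonoidAlgebra.single γ (1:K) - AddMonoidAlgebra.single 0 c ∈ I)
    (hd : AddMonoidAlgebra.single γ (1:K) - AddMonoidAlgebra.single 0 d ∈ I) : c = d := by
  by_contra hne
  apply hI
  have hmem : AddMonoidAlgebra.single (0:G) (d - c) ∈ I := by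
    have := Ideal.sub_mem _ hc hd
    rw [sub_sub_sub_cancel_left, ← AddMonoidAlgebra.single_sub] at this
    exact this
  exact Ideal.eq_top_of_isUnit_mem _ hmem (isUnit_single _ (sub_ne_zero.mpr (Ne.symm hne)))

theorem statement7' {K : Type*} [Field K] [IsAlgClosed K] [CharZero K]
    {G : Type*} [AddCommGroup G] (I : Ideal (AddMonoidAlgebra K G))
    (hbin : ∃ S : Set (AddMonoidAlgebra K G), (∀ f ∈ S, f.coeff.support.card ≤ 2) ∧ I = Ideal.span S) :
    I.IsRadical := by
  classical
  obtain ⟨S, hS2, rfl⟩ := hbin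
  by_cases htop : Ideal.span S = ⊤
  · rw [htop]
    intro r _
    trivial
  -- the subgroup of exponents of binomials in I
  set I := Ideal.span S with hIdef
  set L : AddSubgroup G :=
    { carrier := {γ | ∃ c : K, c ≠ 0 ∧
        AddMonoidAlgebra.single γ (1:K) - AddMonoidAlgebra.single 0 c ∈ I}
      zero_mem' := ⟨1, one_ne_zero, by simp⟩
      add_mem' := by
        rintro γ δ ⟨c, hc0, hc⟩ ⟨d, hd0, hd⟩
        exact ⟨c * d, mul_ne_zero hc0 hd0, binAdd I hc hd⟩
      neg_mem' := by
        rintro γ ⟨c, hc0, hc⟩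
        exact ⟨c⁻¹, inv_ne_zero hc0, binNeg I hc0 hc⟩ } with hL
  -- the partial character
  have hchoose : ∀ γ : L, ∃ c : K, c ≠ 0 ∧
      AddMonoidAlgebra.single (γ:G) (1:K) - AddMonoidAlgebra.single 0 c ∈ I := fun γ => γ.2
  choose cf hcf0 hcfI using hchoose
  set ρu : L → Kˣ := fun γ => Units.mk0 (cf γ) (hcf0 γ) with hρu
  have hρadd : ∀ γ δ : L, ρu (γ + δ) = ρu γ * ρu δ := by
    intro γ δ
    apply Units.ext
    show cf (γ + δ) = cf γ * cf δ
    exact binUniq I htop (hcfI (γ + δ)) (binAdd I (hcfI γ) (hcfI δ))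
  set ρ : L →+ Additive Kˣ :=
    AddMonoidHom.mk' (fun γ => Additive.ofMul (ρu γ)) (fun γ δ => congrArg Additive.ofMul
      (hρadd γ δ)) with hρ
  have hval : ∀ γ : L, ((Additive.toMul (ρ γ) : Kˣ) : K) = cf γ := fun γ => rfl
  -- I is the character lattice ideal
  have heq : I = Ideal.span (Set.range (fun γ : L => AddMonoidAlgebra.single (γ:G) (1:K) -
      AddMonoidAlgebra.single 0 ((Additive.toMul (ρ γ) : Kˣ) : K))) := by
    apply le_antisymm
    · rw [hIdef, Ideal.span_le]
      intro f hf
      have hfI : f ∈ I := by rw [hIdef]; exact Ideal.subset_span hf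
      have hb2 := hS2 f hf
      rcases (show f.coeff.support.card = 0 ∨ f.coeff.support.card = 1 ∨ f.coeff.support.card = 2 by omega)
        with hcard | hcard | hcard
      · -- card 0
        rw [Finset.card_eq_zero, Finsupp.support_eq_empty] at hcard
        rw [show f = 0 from AddMonoidAlgebra.coeff_injective hcard]
        exact Ideal.zero_mem _
      · -- card 1 : monomial, which is a unit; contradiction
        exfalso
        obtain ⟨a, b, hb, hfs⟩ := Finsupp.card_support_eq_one'.mp hcard
        rw [show f = AddMonoidAlgebra.single a b from AddMonoidAlgebra.coeff_injective hfs] at hfI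
        exact htop (Ideal.eq_top_of_isUnit_mem _ hfI (isUnit_single _ hb))
      · -- card 2
        obtain ⟨a, b, hab, hsupp⟩ := Finset.card_eq_two.mp hcard
        set ca := f.coeff a with hca
        set cb := f.coeff b with hcb
        have hfa : ca ≠ 0 := Finsupp.mem_support_iff.mp (by rw [hsupp]; simp)
        have hfb : cb ≠ 0 := Finsupp.mem_support_iff.mp (by rw [hsupp]; simp)
        have hdecomp : f = AddMonoidAlgebra.single a ca + AddMonoidAlgebra.single b cb := by
          ext x
          rw [AddMonoidAlgebra.coeff_add, AddMonoidAlgebra.coeff_single, AddMonoidAlgebra.coeff_single,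
            Finsupp.add_apply, Finsupp.single_apply, Finsupp.single_apply]
          rcases eq_or_ne a x with rfl | hax
          · rw [if_pos rfl, if_neg (Ne.symm hab), add_zero, hca]
          · rcases eq_or_ne b x with rfl | hbx
            · rw [if_neg hax, if_pos rfl, zero_add, hcb]
            · have hx : f.coeff x = 0 := by
                rw [← Finsupp.notMem_support_iff, hsupp]
                simp [Ne.symm hax, Ne.symm hbx]
              rw [if_neg hax, if_neg hbx, add_zero, hx]
        set e : K := -(cb / ca) with he
        have he0 : e ≠ 0 := by
          rw [he, neg_ne_zero]
          exact div_ne_zero hfb hfa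
        have hbinI : AddMonoidAlgebra.single (a - b) (1:K) -
            AddMonoidAlgebra.single 0 e ∈ I := by
          have hmul : AddMonoidAlgebra.single (-b) ca⁻¹ * f =
              AddMonoidAlgebra.single (a - b) (1:K) - AddMonoidAlgebra.single 0 e := by
            rw [hdecomp, mul_add, AddMonoidAlgebra.single_mul_single,
              AddMonoidAlgebra.single_mul_single]
            rw [show -b + a = a - b by abel, neg_add_cancel, inv_mul_cancel₀ hfa]
            have hsn : (AddMonoidAlgebra.single (0:G) (-(cb/ca)) : AddMonoidAlgebra K G) =
                - AddMonoidAlgebra.single (0:G) (cb/ca) := AddMonoidAlgebra.single_neg _ _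
            rw [he, hsn, sub_neg_eq_add]
            congr 1
            rw [div_eq_inv_mul]
          rw [← hmul]
          exact Ideal.mul_mem_left _ _ hfI
        have hmemL : a - b ∈ L := ⟨e, he0, hbinI⟩
        have hee : e = cf ⟨a - b, hmemL⟩ := binUniq I htop hbinI (hcfI ⟨a - b, hmemL⟩)
        have hfactor : f = AddMonoidAlgebra.single b ca *
            (AddMonoidAlgebra.single (a - b) (1:K) - AddMonoidAlgebra.single 0 e) := by
          rw [mul_sub, AddMonoidAlgebra.single_mul_single, AddMonoidAlgebra.single_mul_single,
            show b + (a - b) = a by abel, add_zero, mul_one, hdecomp]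
          have hsn : (AddMonoidAlgebra.single b (-(ca * (cb/ca))) : AddMonoidAlgebra K G) =
              - AddMonoidAlgebra.single b (ca * (cb/ca)) := AddMonoidAlgebra.single_neg _ _
          rw [he, mul_neg, hsn, sub_neg_eq_add]
          congr 1
          field_simp
        rw [hfactor]
        refine Ideal.mul_mem_left _ _ (Ideal.subset_span ?_)
        refine ⟨⟨a - b, hmemL⟩, ?_⟩
        show AddMonoidAlgebra.single ((⟨a - b, hmemL⟩ : L) : G) (1:K) - AddMonoidAlgebra.single 0
          ((Additive.toMul (ρ ⟨a - b, hmemL⟩) : Kˣ) : K) = _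
        rw [hval, ← hee]
    · rw [Ideal.span_le]
      rintro x ⟨γ, rfl⟩
      show AddMonoidAlgebra.single (γ:G) (1:K) -
        AddMonoidAlgebra.single 0 ((Additive.toMul (ρ γ) : Kˣ) : K) ∈ (I : Set _)
      rw [hval]
      exact hcfI γ
  rw [heq]
  exact latticeIdealChar_isRadical L ρ
end Assemble

end Statement7Aux

/-- Over an algebraically closed field of characteristic zero, any ideal
of the Laurent polynomial ring generated by binomials (Laurent polynomials supported on at
most two monomials) is radical. -/
theorem statement7 {K : Type*} [Field K] [IsAlgClosed K] [CharZero K] {n : ℕ}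
    (I : Ideal (Laurent K n))
    (hbin : ∃ S : Set (Laurent K n), (∀ f ∈ S, f.coeff.support.card ≤ 2) ∧ I = Ideal.span S) :
    I.IsRadical :=
  Statement7Aux.statement7' I hbin
end

section
/- Let K ⊆ L be a field extension and let I ⊆ K[a₁,…,a_m][x₁^±,…,x_n^±] be a parametrized Laurent polynomial ideal. Let Ĩ ⊆ L[a₁,…,a_m][x₁^±,…,x_n^±] be the parametrized ideal generated by the image of I under the natural inclusion. Then the generic root counts coincide: dim_{K(a)} K(a)[x^±]/I_{K(a)} = dim_{L(a)} L(a)[x^±]/Ĩ_{L(a)}, as an equality of cardinals (both sides may be infinite). -/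
open AddMonoidAlgebra

universe u v


theorem coeffRingHom_single {R S : Type*} [CommRing R] [CommRing S] {G : Type*} [AddCommMonoid G]
    (f : R →+* S) (a : G) (c : R) :
    coeffRingHom f (AddMonoidAlgebra.single a c) = AddMonoidAlgebra.single a (f c) := by
  simp [coeffRingHom, liftNCRingHom, AddMonoidAlgebra.liftNC_single,
    AddMonoidAlgebra.singleZeroRingHom, AddMonoidAlgebra.of_apply,
    AddMonoidAlgebra.single_mul_single]

theorem coeffRingHom_comp {R S T : Type*} [CommRing R] [CommRing S] [CommRing T]
    {G : Type*} [AddCommMonoid G] (f : R →+* S) (g : S →+* T) :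
    (coeffRingHom (g.comp f) : AddMonoidAlgebra R G →+* AddMonoidAlgebra T G)
      = (coeffRingHom g).comp (coeffRingHom f) := by
  apply AddMonoidAlgebra.ringHom_ext <;> intro b <;>
    simp [coeffRingHom_single]


section Key
variable {F : Type*} {F' : Type*} [Field F] [Field F'] (g : F →+* F')
  {G : Type*} [AddCommMonoid G]

theorem coeffRingHom_smul (c : F) (x : AddMonoidAlgebra F G) :
    coeffRingHom g (c • x) = g c • coeffRingHom g x := by
  rw [Algebra.smul_def, Algebra.smul_def, map_mul]
  congr 1
  rw [AddMonoidAlgebra.coe_algebraMap, AddMonoidAlgebra.coe_algebraMap]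
  simp [coeffRingHom_single]

theorem map_le_span (J : Ideal (AddMonoidAlgebra F G)) :
    ∀ x ∈ J.map (coeffRingHom g),
      x ∈ Submodule.span F' (⇑(coeffRingHom (G := G) g) '' (J : Set _)) := by
  set φ : AddMonoidAlgebra F G →+* AddMonoidAlgebra F' G := coeffRingHom g with hφ
  set N := Submodule.span F' (⇑φ '' (J : Set _)) with hN
  have hmul : ∀ (w : AddMonoidAlgebra F' G), ∀ x ∈ N, w * x ∈ N := by
    intro w
    induction w using AddMonoidAlgebra.induction_linear with
    | zero => intro x hx; rw [zero_mul]; exact N.zero_mem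
    | add f₁ f₂ h1 h2 => intro x hx; rw [add_mul]; exact N.add_mem (h1 x hx) (h2 x hx)
    | single a b =>
      intro x hx
      refine Submodule.span_induction ?_ ?_ ?_ ?_ hx
      · rintro _ ⟨y, hy, rfl⟩
        have h1 : (AddMonoidAlgebra.single a b) * φ y
            = b • φ (AddMonoidAlgebra.single a (1 : F) * y) := by
          rw [map_mul, coeffRingHom_single, map_one, ← smul_mul_assoc]
          congr 1
          rw [AddMonoidAlgebra.smul_single', mul_one]
        rw [h1]
        exact N.smul_mem _ (Submodule.subset_span ⟨_, J.mul_mem_left _ hy, rfl⟩)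
      · rw [mul_zero]; exact N.zero_mem
      · intro y z _ _ hy hz; rw [mul_add]; exact N.add_mem hy hz
      · intro c y _ hy; rw [mul_smul_comm]; exact N.smul_mem _ hy
  intro x hx
  have hmap : J.map φ = Ideal.span (⇑φ '' (J : Set _)) := rfl
  rw [hmap] at hx
  refine Submodule.span_induction ?_ ?_ ?_ ?_ hx
  · exact fun y hy => Submodule.subset_span hy
  · exact N.zero_mem
  · intro y z _ _ hy hz; exact N.add_mem hy hz
  · intro w y _ hy; exact hmul w y hy

end Key

section Key2
variable {F : Type u} {F' : Type v} [Field F] [Field F'] (g : F →+* F')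
  {G : Type} [AddCommMonoid G]

set_option maxHeartbeats 1000000 in
theorem key_rank (J : Ideal (AddMonoidAlgebra F G)) :
    Cardinal.lift.{v} (Module.rank F (AddMonoidAlgebra F G ⧸ J)) =
      Cardinal.lift.{u} (Module.rank F'
        (AddMonoidAlgebra F' G ⧸ J.map (coeffRingHom g))) := by
  classical
  set φ : AddMonoidAlgebra F G →+* AddMonoidAlgebra F' G := coeffRingHom g with hφ
  set J' : Ideal (AddMonoidAlgebra F' G) := J.map φ with hJ'
  let b := Module.Basis.ofVectorSpace F (AddMonoidAlgebra F G ⧸ J)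
  choose v hv using fun i => Ideal.Quotient.mk_surjective (I := J) (b i)
  let mk' : AddMonoidAlgebra F' G →ₗ[F'] (AddMonoidAlgebra F' G ⧸ J') :=
    (Ideal.Quotient.mkₐ F' J').toLinearMap
  -- the extension of a linear functional killing J to one killing J'
  have hfun : ∀ (ε : AddMonoidAlgebra F G →ₗ[F] F),
      ∃ ε' : AddMonoidAlgebra F' G →ₗ[F'] F', ∀ x, ε' (φ x) = g (ε x) := by
    intro ε
    refine ⟨(Finsupp.lsum F' fun a =>
      LinearMap.toSpanSingleton F' F' (g (ε (AddMonoidAlgebra.single a 1)))) ∘ₗ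
        (AddMonoidAlgebra.coeffLinearEquiv F').toLinearMap, ?_⟩
    intro x
    induction x using AddMonoidAlgebra.induction_linear with
    | zero => simp
    | add f₁ f₂ h1 h2 => rw [map_add, map_add, map_add, map_add, h1, h2]
    | single a c =>
      rw [coeffRingHom_single, LinearMap.comp_apply, LinearEquiv.coe_coe]
      rw [show AddMonoidAlgebra.coeffLinearEquiv F' (AddMonoidAlgebra.single a (g c) : AddMonoidAlgebra F' G)
            = Finsupp.single a (g c) from rfl]
      rw [Finsupp.lsum_single]
      rw [LinearMap.toSpanSingleton_apply, smul_eq_mul, ← map_mul]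
      congr 1
      have : (AddMonoidAlgebra.single a c : AddMonoidAlgebra F G)
          = c • AddMonoidAlgebra.single a 1 := by
        rw [AddMonoidAlgebra.smul_single', mul_one]
      rw [this, map_smul, smul_eq_mul]
  have hkill : ∀ (ε' : AddMonoidAlgebra F' G →ₗ[F'] F'), (∀ j ∈ J, ε' (φ j) = 0) →
      ∀ z ∈ J', ε' z = 0 := by
    intro ε' hε' z hz
    have hz' := map_le_span g J z hz
    refine Submodule.span_induction ?_ ?_ ?_ ?_ hz'
    · rintro _ ⟨y, hy, rfl⟩; exact hε' y hy
    · exact map_zero ε'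
    · intro y z _ _ hy hz; rw [map_add, hy, hz, add_zero]
    · intro c y _ hy; rw [map_smul, hy, smul_zero]
  have hindep : LinearIndependent F' fun i => mk' (φ (v i)) := by
    rw [linearIndependent_iff]
    intro l hl
    ext i₀
    let ε : AddMonoidAlgebra F G →ₗ[F] F :=
      (b.coord i₀) ∘ₗ (Ideal.Quotient.mkₐ F J).toLinearMap
    obtain ⟨ε', hε'⟩ := hfun ε
    have hεJ : ∀ j ∈ J, ε' (φ j) = 0 := by
      intro j hj
      rw [hε']
      have h1 : ε j = 0 := by
        simp only [ε, LinearMap.comp_apply, AlgHom.toLinearMap_apply,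
          Ideal.Quotient.mkₐ_eq_mk]
        rw [Ideal.Quotient.eq_zero_iff_mem.mpr hj, map_zero]
      rw [h1, map_zero]
    set z := Finsupp.linearCombination F' (fun i => φ (v i)) l with hzdef
    have hl' : mk' z = 0 := by
      rw [hzdef, Finsupp.apply_linearCombination]
      exact hl
    have hzJ : z ∈ J' := by
      rwa [show mk' z = Ideal.Quotient.mk J' z from rfl,
        Ideal.Quotient.eq_zero_iff_mem] at hl'
    have h0 : ε' z = 0 := hkill ε' hεJ z hzJ
    have hεv : ∀ i, ε (v i) = if i = i₀ then 1 else 0 := by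
      intro i
      simp only [ε, LinearMap.comp_apply, AlgHom.toLinearMap_apply,
        Ideal.Quotient.mkₐ_eq_mk, hv]
      rw [Module.Basis.coord_apply, Module.Basis.repr_self, Finsupp.single_apply]
    have hcomp : ε' z = l i₀ := by
      rw [hzdef, Finsupp.linearCombination_apply, map_finsuppSum]
      have : ∀ i ∈ l.support, ε' (l i • φ (v i)) = if i = i₀ then l i else 0 := by
        intro i _
        rw [map_smul, hε', hεv i, apply_ite g, map_one, map_zero, smul_eq_mul,
          mul_ite, mul_one, mul_zero]
      rw [Finsupp.sum, Finset.sum_congr rfl this]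
      rw [Finset.sum_ite_eq' l.support i₀ fun i => l i]
      split
      · rfl
      · next h => exact (Finsupp.notMem_support_iff.mp h).symm
    rw [hcomp] at h0
    simpa using h0
  have hspan : ⊤ ≤ Submodule.span F' (Set.range fun i => mk' (φ (v i))) := by
    set S := Submodule.span F' (Set.range fun i => mk' (φ (v i))) with hS
    let mkF : AddMonoidAlgebra F G →ₗ[F] (AddMonoidAlgebra F G ⧸ J) :=
      (Ideal.Quotient.mkₐ F J).toLinearMap
    have hclaim : ∀ x : AddMonoidAlgebra F G, mk' (φ x) ∈ S := by
      intro x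
      set r := b.repr (Ideal.Quotient.mk J x) with hrdef
      set x' : AddMonoidAlgebra F G := r.sum fun i c => c • v i with hx'def
      have hxx' : Ideal.Quotient.mk J x' = Ideal.Quotient.mk J x := by
        have h1 : mkF x' = r.sum fun i c => c • mkF (v i) := by
          rw [hx'def, map_finsuppSum]
          exact Finsupp.sum_congr fun i _ => map_smul mkF _ _
        have h2 : mkF x' = Finsupp.linearCombination F b r := by
          rw [h1, Finsupp.linearCombination_apply]
          exact Finsupp.sum_congr fun i _ => by
            rw [show mkF (v i) = Ideal.Quotient.mk J (v i) from rfl, hv]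
        have h3 := b.linearCombination_repr (Ideal.Quotient.mk J x)
        rw [show Ideal.Quotient.mk J x' = mkF x' from rfl, h2, hrdef, h3]
      have hmem : x - x' ∈ J := Ideal.Quotient.eq.mp hxx'.symm
      have hsplit : φ x = φ x' + φ (x - x') := by
        rw [← map_add, add_sub_cancel]
      rw [hsplit, map_add]
      have h4 : mk' (φ (x - x')) = 0 := by
        rw [show mk' (φ (x - x')) = Ideal.Quotient.mk J' (φ (x - x')) from rfl,
          Ideal.Quotient.eq_zero_iff_mem]
        exact Ideal.mem_map_of_mem φ hmem
      rw [h4, add_zero]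
      have h5 : φ x' = r.sum fun i c => g c • φ (v i) := by
        rw [hx'def, map_finsuppSum]
        exact Finsupp.sum_congr fun i _ => coeffRingHom_smul g _ _
      rw [h5, map_finsuppSum]
      refine Submodule.sum_mem S fun i _ => ?_
      show mk' (g (r i) • φ (v i)) ∈ S
      rw [map_smul]
      exact S.smul_mem _ (Submodule.subset_span ⟨i, rfl⟩)
    intro y hy
    obtain ⟨w, rfl⟩ := Ideal.Quotient.mk_surjective (I := J') y
    clear hy
    show mk' w ∈ S
    induction w using AddMonoidAlgebra.induction_linear with
    | zero => rw [map_zero]; exact S.zero_mem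
    | add f₁ f₂ h1 h2 => rw [map_add]; exact S.add_mem h1 h2
    | single a c =>
      have h6 : (AddMonoidAlgebra.single a c : AddMonoidAlgebra F' G)
          = c • φ (AddMonoidAlgebra.single a (1 : F)) := by
        rw [coeffRingHom_single, map_one, AddMonoidAlgebra.smul_single', mul_one]
      show mk' (AddMonoidAlgebra.single a c) ∈ S
      rw [h6, map_smul]
      exact S.smul_mem _ (hclaim _)
  let bW := Module.Basis.mk hindep hspan
  rw [← b.mk_eq_rank'']
  exact bW.mk_eq_rank

end Key2


set_option maxHeartbeats 1000000 in
/-- The generic root count of a parametrized Laurent polynomial ideal is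
invariant under field extension `K ⊆ L`: if `Ĩ ⊆ L[a][x^±]` is generated by the image of
`I ⊆ K[a][x^±]`, then `dim_{K(a)} K(a)[x^±]/I_{K(a)} = dim_{L(a)} L(a)[x^±]/Ĩ_{L(a)}`. -/
theorem statement8 {K : Type u} {L : Type v} [Field K] [Field L] [Algebra K L]
    {m n : ℕ} (I : Ideal (Param K (Fin m) n)) :
    Cardinal.lift.{v} (genericRootCount I) =
      Cardinal.lift.{u} (genericRootCount
        (Ideal.map (coeffRingHom (MvPolynomial.map (algebraMap K L))) I)) := by
  classical
  have hle : nonZeroDivisors (MvPolynomial (Fin m) K) ≤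
      (nonZeroDivisors (MvPolynomial (Fin m) L)).comap
        (MvPolynomial.map (algebraMap K L) :
          MvPolynomial (Fin m) K →+* MvPolynomial (Fin m) L) :=
    nonZeroDivisors_le_comap_nonZeroDivisors_of_injective _
      (MvPolynomial.map_injective _ (algebraMap K L).injective)
  let g : RatFF K (Fin m) →+* RatFF L (Fin m) :=
    IsLocalization.map (RatFF L (Fin m))
      (MvPolynomial.map (algebraMap K L) :
        MvPolynomial (Fin m) K →+* MvPolynomial (Fin m) L) hle
  have hcomp : g.comp (algebraMap (MvPolynomial (Fin m) K) (RatFF K (Fin m)))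
      = (algebraMap (MvPolynomial (Fin m) L) (RatFF L (Fin m))).comp
          (MvPolynomial.map (algebraMap K L)) :=
    IsLocalization.map_comp hle
  have hideal : genericSpec (Ideal.map (coeffRingHom (MvPolynomial.map (algebraMap K L))) I)
      = Ideal.map (coeffRingHom g) (genericSpec I) := by
    unfold genericSpec
    rw [Ideal.map_map, ← coeffRingHom_comp, ← hcomp, coeffRingHom_comp, ← Ideal.map_map]
  unfold genericRootCount
  rw [hideal]
  exact key_rank g (genericSpec I)
end

section
/- Let K be an algebraically closed field of characteristic 0 and let I ⊆ K[a₁,…,a_m][x₁^±,…,x_n^±] be a parametrized Laurent polynomial ideal that is generically zero-dimensional, with generic root count ℓ := dim_{K(a)} K(a)[x^±]/I_{K(a)} < ∞. Then there exists a nonzero polynomial g ∈ K[a₁,…,a_m] such that for every P ∈ K^m with g(P) ≠ 0, the specialization satisfies dim_K K[x₁^±,…,x_n^±]/I_P = ℓ. (Since K^m is irreducible in the Zariski topology, this says that the root count equals the generic root count on a Zariski-dense open subset of the parameter space.) -/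
open AddMonoidAlgebra

/-! ### Auxiliary lemmas -/

section CoeffLemmas

variable {R S : Type*} [CommRing R] [CommRing S] {G : Type*} [AddCommMonoid G] (f : R →+* S)

theorem coeffRingHom_single_s9 (e : G) (r : R) :
    coeffRingHom f (AddMonoidAlgebra.single e r) = AddMonoidAlgebra.single e (f r) := by
  simp [coeffRingHom, AddMonoidAlgebra.liftNCRingHom, AddMonoidAlgebra.liftNC_single,
    AddMonoidAlgebra.singleZeroRingHom, AddMonoidAlgebra.of_apply,
    AddMonoidAlgebra.single_mul_single]

theorem coeffRingHom_apply (p : AddMonoidAlgebra R G) (e : G) :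
    (coeffRingHom f p).coeff e = f (p.coeff e) := by
  induction p using AddMonoidAlgebra.induction_linear with
  | zero => simp
  | add p q hp hq => rw [map_add, AddMonoidAlgebra.coeff_add, Finsupp.add_apply, hp, hq, AddMonoidAlgebra.coeff_add, Finsupp.add_apply, map_add]
  | single a b =>
      rw [coeffRingHom_single_s9]
      classical
      simp [Finsupp.single_apply]
      split <;> simp

theorem coeffRingHom_injective (hf : Function.Injective f) :
    Function.Injective (coeffRingHom (G := G) f) := by
  intro p q hpq
  ext e
  apply hf
  rw [← coeffRingHom_apply, ← coeffRingHom_apply, hpq]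

theorem coeffRingHom_surjective (hf : Function.Surjective f) :
    Function.Surjective (coeffRingHom (G := G) f) := by
  intro q
  classical
  refine ⟨q.coeff.support.sum (fun e => AddMonoidAlgebra.single e (Function.surjInv hf (q.coeff e))), ?_⟩
  rw [map_sum]
  conv_rhs => rw [← AddMonoidAlgebra.sum_single q]
  rw [Finsupp.sum]
  exact Finset.sum_congr rfl fun e _ => by
    rw [coeffRingHom_single_s9, Function.surjInv_eq hf]

/-- `single 0` is multiplicative. -/
theorem single_zero_mul' (a b : R) :
    (AddMonoidAlgebra.single (0 : G) (a * b) : AddMonoidAlgebra R G)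
      = AddMonoidAlgebra.single 0 a * AddMonoidAlgebra.single 0 b := by
  rw [AddMonoidAlgebra.single_mul_single, zero_add]

/-- Multiplication by a constant becomes a scalar action in a quotient. -/
theorem quot_single_zero_mul (J : Ideal (AddMonoidAlgebra R G)) (κ : R)
    (z : AddMonoidAlgebra R G) :
    Ideal.Quotient.mk J (AddMonoidAlgebra.single 0 κ * z)
      = κ • Ideal.Quotient.mk J z := by
  have h1 : (AddMonoidAlgebra.single (0 : G) κ : AddMonoidAlgebra R G)
      = algebraMap R (AddMonoidAlgebra R G) κ := by
    rw [AddMonoidAlgebra.coe_algebraMap]; simp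
  rw [h1, map_mul]
  have h2 : Ideal.Quotient.mk J (algebraMap R (AddMonoidAlgebra R G) κ)
      = algebraMap R (AddMonoidAlgebra R G ⧸ J) κ := rfl
  rw [h2, ← Algebra.smul_def]

end CoeffLemmas

theorem laurent_exponents_mem {n : ℕ} (T : AddSubmonoid (Fin n →₀ ℤ))
    (h1 : ∀ j : Fin n, Finsupp.single j (1 : ℤ) ∈ T)
    (h2 : ∀ j : Fin n, Finsupp.single j (-1 : ℤ) ∈ T) (e : Fin n →₀ ℤ) : e ∈ T := by
  induction e using Finsupp.induction with
  | zero => exact T.zero_mem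
  | single_add j z rest _ _ ih =>
      refine T.add_mem ?_ ih
      have : Finsupp.single j z
          = z.toNat • Finsupp.single j (1 : ℤ) + (-z).toNat • Finsupp.single j (-1 : ℤ) := by
        rw [Finsupp.smul_single, Finsupp.smul_single, ← Finsupp.single_add]
        congr 1
        simp only [nsmul_eq_mul, mul_one, mul_neg]
        omega
      rw [this]
      exact T.add_mem (T.nsmul_mem (h1 j) _) (T.nsmul_mem (h2 j) _)

theorem mul_mem_of_single_stable {R : Type*} [CommRing R] {n : ℕ}
    (V : Submodule R (Laurent R n))
    (h1 : ∀ j : Fin n, ∀ v ∈ V,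
      AddMonoidAlgebra.single (Finsupp.single j (1 : ℤ)) (1 : R) * v ∈ V)
    (h2 : ∀ j : Fin n, ∀ v ∈ V,
      AddMonoidAlgebra.single (Finsupp.single j (-1 : ℤ)) (1 : R) * v ∈ V)
    (y : Laurent R n) : ∀ v ∈ V, y * v ∈ V := by
  classical
  have hsingle : ∀ e : Fin n →₀ ℤ, ∀ v ∈ V, AddMonoidAlgebra.single e (1 : R) * v ∈ V := by
    let T : AddSubmonoid (Fin n →₀ ℤ) :=
      { carrier := {e | ∀ v ∈ V, AddMonoidAlgebra.single e (1 : R) * v ∈ V}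
        zero_mem' := by
          intro v hv
          rw [← AddMonoidAlgebra.one_def, one_mul]
          exact hv
        add_mem' := by
          intro a b ha hb v hv
          have : AddMonoidAlgebra.single (a + b) (1 : R) * v
              = AddMonoidAlgebra.single a (1 : R) * (AddMonoidAlgebra.single b (1 : R) * v) := by
            rw [← mul_assoc, AddMonoidAlgebra.single_mul_single, one_mul]
          rw [this]
          exact ha _ (hb v hv) }
    exact fun e => laurent_exponents_mem T h1 h2 e
  induction y using AddMonoidAlgebra.induction_linear with
  | zero => intro v hv; rw [zero_mul]; exact V.zero_mem
  | add p q hp hq =>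
      intro v hv
      rw [add_mul]
      exact V.add_mem (hp v hv) (hq v hv)
  | single e r =>
      intro v hv
      have : AddMonoidAlgebra.single e r * v = r • (AddMonoidAlgebra.single e (1 : R) * v) := by
        rw [← smul_mul_assoc, AddMonoidAlgebra.smul_single, smul_eq_mul, mul_one]
      rw [this]
      exact V.smul_mem _ (hsingle e v hv)

section Denominators

variable {A : Type*} [CommRing A] [IsDomain A] {G : Type*} [AddCommMonoid G]

/-- Denominator clearing for elements of the Laurent ring over the fraction field. -/
theorem exists_denominator (z : AddMonoidAlgebra (FractionRing A) G) :
    ∃ (d : A) (β : AddMonoidAlgebra A G), d ≠ 0 ∧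
      AddMonoidAlgebra.single 0 (algebraMap A (FractionRing A) d) * z
        = coeffRingHom (algebraMap A (FractionRing A)) β := by
  induction z using AddMonoidAlgebra.induction with
  | zero => exact ⟨1, 0, one_ne_zero, by simp⟩
  | single_add e f rest _ _ ih =>
      obtain ⟨d₂, β₂, hd₂, h₂⟩ := ih
      obtain ⟨⟨p, q⟩, hq⟩ := IsLocalization.surj (nonZeroDivisors A) f
      have hq0 : (q : A) ≠ 0 := nonZeroDivisors.coe_ne_zero q
      refine ⟨q * d₂, AddMonoidAlgebra.single 0 d₂ * AddMonoidAlgebra.single e p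
          + AddMonoidAlgebra.single 0 (q : A) * β₂, mul_ne_zero hq0 hd₂, ?_⟩
      have he : (AddMonoidAlgebra.single e (algebraMap A (FractionRing A) p)
            : AddMonoidAlgebra (FractionRing A) G)
          = AddMonoidAlgebra.single e f
            * AddMonoidAlgebra.single 0 (algebraMap A (FractionRing A) q) := by
        rw [AddMonoidAlgebra.single_mul_single, add_zero, hq]
      simp only [map_add, map_mul, coeffRingHom_single_s9, single_zero_mul']
      rw [he, ← h₂]
      ring

/-- Elements of the generic specialization have denominators. -/
theorem exists_denominator_map (I : Ideal (AddMonoidAlgebra A G))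
    (z : AddMonoidAlgebra (FractionRing A) G)
    (hz : z ∈ Ideal.map (coeffRingHom (algebraMap A (FractionRing A))) I) :
    ∃ (d : A) (w : AddMonoidAlgebra A G), d ≠ 0 ∧ w ∈ I ∧
      AddMonoidAlgebra.single 0 (algebraMap A (FractionRing A) d) * z
        = coeffRingHom (algebraMap A (FractionRing A)) w := by
  rw [Ideal.map] at hz
  refine Submodule.span_induction ?_ ?_ ?_ ?_ hz
  · rintro x ⟨w, hw, rfl⟩
    exact ⟨1, w, one_ne_zero, hw, by simp [← AddMonoidAlgebra.one_def]⟩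
  · exact ⟨1, 0, one_ne_zero, I.zero_mem, by simp⟩
  · rintro x y _ _ ⟨d₁, w₁, hd₁, hw₁, h₁⟩ ⟨d₂, w₂, hd₂, hw₂, h₂⟩
    refine ⟨d₁ * d₂, AddMonoidAlgebra.single 0 d₂ * w₁ + AddMonoidAlgebra.single 0 d₁ * w₂,
      mul_ne_zero hd₁ hd₂, I.add_mem (I.mul_mem_left _ hw₁) (I.mul_mem_left _ hw₂), ?_⟩
    simp only [map_add, map_mul, coeffRingHom_single_s9, single_zero_mul']
    rw [← h₁, ← h₂]
    ring
  · rintro r x _ ⟨d₁, w₁, hd₁, hw₁, h₁⟩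
    obtain ⟨d₂, β₂, hd₂, h₂⟩ := exists_denominator r
    refine ⟨d₂ * d₁, β₂ * w₁, mul_ne_zero hd₂ hd₁, I.mul_mem_left _ hw₁, ?_⟩
    simp only [map_mul, coeffRingHom_single_s9, single_zero_mul', smul_eq_mul]
    rw [← h₁, ← h₂]
    ring

end Denominators

/-- The relation predicate: `d·β ≡ ∑ cᵢ·bᵢ mod I`. -/
def LRel {A : Type*} [CommRing A] {n ℓ : ℕ} (I : Ideal (Laurent A n))
    (b : Fin ℓ → Laurent A n) (d : A) (β : Laurent A n) (c : Fin ℓ → A) : Prop :=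
  AddMonoidAlgebra.single 0 d * β - ∑ i, AddMonoidAlgebra.single 0 (c i) * b i ∈ I

theorem LRel.of_dvd {A : Type*} [CommRing A] {n ℓ : ℕ} {I : Ideal (Laurent A n)}
    {b : Fin ℓ → Laurent A n} {d d' : A} {β : Laurent A n} {c : Fin ℓ → A}
    (h : LRel I b d β c) (hdvd : d ∣ d') : ∃ c', LRel I b d' β c' := by
  obtain ⟨r, rfl⟩ := hdvd
  refine ⟨fun i => r * c i, ?_⟩
  unfold LRel at h ⊢
  have : AddMonoidAlgebra.single (0 : Fin n →₀ ℤ) (d * r) * β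
        - ∑ i, AddMonoidAlgebra.single 0 (r * c i) * b i
      = AddMonoidAlgebra.single (0 : Fin n →₀ ℤ) r
        * (AddMonoidAlgebra.single 0 d * β - ∑ i, AddMonoidAlgebra.single 0 (c i) * b i) := by
    rw [mul_sub, Finset.mul_sum]
    simp only [single_zero_mul']
    congr 1
    · ring
    · exact Finset.sum_congr rfl fun i _ => by ring
  rw [this]
  exact I.mul_mem_left _ h

set_option maxHeartbeats 1000000 in
set_option synthInstance.maxHeartbeats 200000 in
/-- The key spanning lemma: if the generators and `1` admit relations with denominator `g`,
then every element admits a relation with denominator a power of `g`. -/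
theorem exists_rel_pow {A : Type*} [CommRing A] {n ℓ : ℕ} (I : Ideal (Laurent A n))
    (b : Fin ℓ → Laurent A n) (g : A)
    (h1 : ∃ c, LRel I b g 1 c)
    (hp : ∀ (j : Fin n) (i : Fin ℓ), ∃ c, LRel I b g
      (AddMonoidAlgebra.single (Finsupp.single j (1 : ℤ)) 1 * b i) c)
    (hm : ∀ (j : Fin n) (i : Fin ℓ), ∃ c, LRel I b g
      (AddMonoidAlgebra.single (Finsupp.single j (-1 : ℤ)) 1 * b i) c)
    (β : Laurent A n) : ∃ (k : ℕ) (c : Fin ℓ → A), LRel I b (g ^ k) β c := by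
  classical
  let mkI := Ideal.Quotient.mk I
  let ρ : A →+* (Laurent A n ⧸ I) := mkI.comp AddMonoidAlgebra.singleZeroRingHom
  have hρ : ∀ (a : A) (x : Laurent A n), mkI (AddMonoidAlgebra.single 0 a * x) = ρ a * mkI x :=
    fun a x => by rw [map_mul]; rfl
  have hrel_iff : ∀ (d : A) (β : Laurent A n) (c : Fin ℓ → A),
      LRel I b d β c ↔ ρ d * mkI β = ∑ i, ρ (c i) * mkI (b i) := by
    intro d β c
    rw [LRel, ← Ideal.Quotient.eq_zero_iff_mem, map_sub, sub_eq_zero, hρ, map_sum]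
    rw [Finset.sum_congr rfl fun i _ => hρ (c i) (b i)]
  let V : Submodule A (Laurent A n) :=
    { carrier := {β | ∃ (k : ℕ) (c : Fin ℓ → A), LRel I b (g ^ k) β c}
      zero_mem' := by
        refine ⟨0, 0, ?_⟩
        rw [hrel_iff]
        simp
      add_mem' := by
        rintro β₁ β₂ ⟨k₁, c₁, hc₁⟩ ⟨k₂, c₂, hc₂⟩
        obtain ⟨c₁', hc₁'⟩ := hc₁.of_dvd (pow_dvd_pow g (Nat.le_add_right k₁ k₂))
        obtain ⟨c₂', hc₂'⟩ := hc₂.of_dvd (pow_dvd_pow g (Nat.le_add_left k₂ k₁))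
        refine ⟨k₁ + k₂, c₁' + c₂', ?_⟩
        rw [hrel_iff] at hc₁' hc₂' ⊢
        rw [map_add, mul_add, hc₁', hc₂', ← Finset.sum_add_distrib]
        exact Finset.sum_congr rfl fun i _ => by
          simp only [Pi.add_apply, map_add]; ring
      smul_mem' := by
        rintro a β ⟨k, c, hc⟩
        refine ⟨k, fun i => a * c i, ?_⟩
        rw [hrel_iff] at hc ⊢
        have : mkI (a • β) = ρ a * mkI β := by
          rw [Algebra.smul_def]
          rw [show (algebraMap A (Laurent A n)) a = AddMonoidAlgebra.single 0 a from by
            rw [AddMonoidAlgebra.coe_algebraMap]; simp]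
          exact hρ a β
        rw [this, mul_left_comm, hc, Finset.mul_sum]
        exact Finset.sum_congr rfl fun i _ => by rw [map_mul]; ring }
  have hstab : ∀ (u : Laurent A n),
      (∀ i : Fin ℓ, ∃ c, LRel I b g (u * b i) c) → ∀ β ∈ V, u * β ∈ V := by
    rintro u hu β ⟨k, c, hc⟩
    choose cu hcu using hu
    refine ⟨k + 1, fun t => ∑ i, c i * cu i t, ?_⟩
    rw [hrel_iff] at hc ⊢
    have hgu : ∀ i, ρ g * mkI (u * b i) = ∑ t, ρ (cu i t) * mkI (b t) :=
      fun i => (hrel_iff _ _ _).mp (hcu i)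
    calc ρ (g ^ (k + 1)) * mkI (u * β)
        = (ρ g * mkI u) * (ρ (g ^ k) * mkI β) := by
          rw [map_pow, map_pow, pow_succ, map_mul]; ring
      _ = (ρ g * mkI u) * ∑ i, ρ (c i) * mkI (b i) := by rw [hc]
      _ = ∑ i, ρ (c i) * (ρ g * mkI (u * b i)) := by
          rw [Finset.mul_sum]
          exact Finset.sum_congr rfl fun i _ => by rw [map_mul]; ring
      _ = ∑ i, ρ (c i) * ∑ t, ρ (cu i t) * mkI (b t) := by
          exact Finset.sum_congr rfl fun i _ => by rw [hgu i]
      _ = ∑ t, ρ (∑ i, c i * cu i t) * mkI (b t) := by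
          simp only [Finset.mul_sum, map_sum, Finset.sum_mul, map_mul]
          rw [Finset.sum_comm]
          exact Finset.sum_congr rfl fun t _ => Finset.sum_congr rfl fun i _ => by ring
  have h1V : (1 : Laurent A n) ∈ V := by
    obtain ⟨c, hc⟩ := h1
    obtain ⟨c', hc'⟩ := hc.of_dvd (dvd_pow_self g one_ne_zero : g ∣ g ^ 1)
    exact ⟨1, c', hc'⟩
  have := mul_mem_of_single_stable V
    (fun j v hv => hstab _ (hp j) v hv) (fun j v hv => hstab _ (hm j) v hv) β 1 h1V
  rw [mul_one] at this
  exact this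

section Generic
set_option maxHeartbeats 1000000
set_option synthInstance.maxHeartbeats 200000

variable {A : Type*} [CommRing A] [IsDomain A] {n ℓ : ℕ}
  (I : Ideal (Laurent A n)) (b : Fin ℓ → Laurent A n)

local notation "F" => FractionRing A
local notation "φ" => coeffRingHom (algebraMap A (FractionRing A))
local notation "J" => Ideal.map (coeffRingHom (algebraMap A (FractionRing A))) I

omit [IsDomain A] in
theorem tau_smul (a : A) (x : Laurent A n) :
    Ideal.Quotient.mk J (φ (AddMonoidAlgebra.single 0 a * x))
      = algebraMap A F a • Ideal.Quotient.mk J (φ x) := by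
  rw [map_mul, coeffRingHom_single_s9, quot_single_zero_mul]

theorem generic_inj (v : Module.Basis (Fin ℓ) (FractionRing A)
      (Laurent (FractionRing A) n ⧸ Ideal.map (coeffRingHom (algebraMap A (FractionRing A))) I))
    (hv : ∀ i, v i = Ideal.Quotient.mk _ (coeffRingHom (algebraMap A (FractionRing A)) (b i)))
    (c : Fin ℓ → A)
    (hc : (∑ i, AddMonoidAlgebra.single 0 (c i) * b i) ∈ I) : ∀ i, c i = 0 := by
  have h0 : Ideal.Quotient.mk J (φ (∑ i, AddMonoidAlgebra.single 0 (c i) * b i)) = 0 :=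
    Ideal.Quotient.eq_zero_iff_mem.mpr (Ideal.mem_map_of_mem _ hc)
  rw [map_sum, map_sum] at h0
  have h1 : ∑ i, algebraMap A F (c i) • v i = 0 := by
    rw [← h0]
    exact Finset.sum_congr rfl fun i _ => by rw [tau_smul, hv]
  intro i
  have := Fintype.linearIndependent_iff.mp v.linearIndependent _ h1 i
  exact IsFractionRing.injective A F (by rw [this, map_zero])

theorem generic_rel (v : Module.Basis (Fin ℓ) (FractionRing A)
      (Laurent (FractionRing A) n ⧸ Ideal.map (coeffRingHom (algebraMap A (FractionRing A))) I))
    (hv : ∀ i, v i = Ideal.Quotient.mk _ (coeffRingHom (algebraMap A (FractionRing A)) (b i)))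
    (β : Laurent A n) :
    ∃ d : A, d ≠ 0 ∧ ∃ c : Fin ℓ → A, LRel I b d β c := by
  classical
  set y := Ideal.Quotient.mk J (φ β) with hy
  obtain ⟨D, hD⟩ := IsLocalization.exist_integer_multiples (nonZeroDivisors A)
    Finset.univ (fun i => v.repr y i)
  have hD' : ∀ i, ∃ p : A, algebraMap A F p = (D : A) • v.repr y i := by
    intro i
    obtain ⟨p, hp⟩ := hD i (Finset.mem_univ i)
    exact ⟨p, hp⟩
  choose p hp using hD'
  have hR : ∀ i, Ideal.Quotient.mk J (φ (AddMonoidAlgebra.single 0 (p i) * b i))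
      = algebraMap A F (p i) • v i := fun i => by rw [tau_smul, hv]
  have hDy : Ideal.Quotient.mk J (φ (AddMonoidAlgebra.single 0 (D : A) * β
      - ∑ i, AddMonoidAlgebra.single 0 (p i) * b i)) = 0 := by
    rw [map_sub, map_sum, map_sub, map_sum, tau_smul, ← hy, sub_eq_zero]
    rw [Finset.sum_congr rfl fun i _ => hR i]
    have h3 : ∀ i, algebraMap A F (p i) • v i
        = algebraMap A F (D : A) • (v.repr y i • v i) := fun i => by
      rw [hp i, Algebra.smul_def ((D : A)) (v.repr y i), mul_smul]
    rw [Finset.sum_congr rfl fun i _ => h3 i, ← Finset.smul_sum, Module.Basis.sum_repr v y]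
  have hmem := Ideal.Quotient.eq_zero_iff_mem.mp hDy
  obtain ⟨d₂, w, hd₂, hw, heq⟩ := exists_denominator_map I _ hmem
  have heq2 : φ (AddMonoidAlgebra.single 0 d₂ * (AddMonoidAlgebra.single 0 (D : A) * β
      - ∑ i, AddMonoidAlgebra.single 0 (p i) * b i)) = φ w := by
    rw [map_mul, coeffRingHom_single_s9]; exact heq
  have hBe := coeffRingHom_injective _ (IsFractionRing.injective A (FractionRing A)) heq2
  refine ⟨d₂ * D, mul_ne_zero hd₂ (nonZeroDivisors.coe_ne_zero D), fun i => d₂ * p i, ?_⟩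
  unfold LRel
  have hident : AddMonoidAlgebra.single (0 : Fin n →₀ ℤ) (d₂ * (D : A)) * β
      - ∑ i, AddMonoidAlgebra.single 0 (d₂ * p i) * b i
      = AddMonoidAlgebra.single 0 d₂ * (AddMonoidAlgebra.single 0 (D : A) * β
        - ∑ i, AddMonoidAlgebra.single 0 (p i) * b i) := by
    rw [mul_sub, Finset.mul_sum]
    simp only [single_zero_mul']
    congr 1
    · ring
    · exact Finset.sum_congr rfl fun i _ => by ring
  rw [hident, hBe]
  exact hw

end Generic

section SpecSide
set_option maxHeartbeats 1000000
set_option synthInstance.maxHeartbeats 200000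

variable {A : Type*} [CommRing A] {n ℓ : ℕ} (I : Ideal (Laurent A n))
  (b : Fin ℓ → Laurent A n)

theorem LRel.mul_right {I : Ideal (Laurent A n)} {b : Fin ℓ → Laurent A n}
    {d : A} {β : Laurent A n} {c : Fin ℓ → A} (h : LRel I b d β c) (r : A) :
    LRel I b (d * r) β (fun i => r * c i) := by
  unfold LRel at h ⊢
  have : AddMonoidAlgebra.single (0 : Fin n →₀ ℤ) (d * r) * β
        - ∑ i, AddMonoidAlgebra.single 0 (r * c i) * b i
      = AddMonoidAlgebra.single (0 : Fin n →₀ ℤ) r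
        * (AddMonoidAlgebra.single 0 d * β - ∑ i, AddMonoidAlgebra.single 0 (c i) * b i) := by
    rw [mul_sub, Finset.mul_sum]
    simp only [single_zero_mul']
    congr 1
    · ring
    · exact Finset.sum_congr rfl fun i _ => by ring
  rw [this]
  exact I.mul_mem_left _ h

theorem lrel_iff (d : A) (β : Laurent A n) (c : Fin ℓ → A) :
    LRel I b d β c ↔
      (Ideal.Quotient.mk I).comp AddMonoidAlgebra.singleZeroRingHom d * Ideal.Quotient.mk I β
        = ∑ i, (Ideal.Quotient.mk I).comp AddMonoidAlgebra.singleZeroRingHom (c i)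
            * Ideal.Quotient.mk I (b i) := by
  have hρ : ∀ (a : A) (x : Laurent A n), Ideal.Quotient.mk I (AddMonoidAlgebra.single 0 a * x)
      = (Ideal.Quotient.mk I).comp AddMonoidAlgebra.singleZeroRingHom a
          * Ideal.Quotient.mk I x := fun a x => by rw [map_mul]; rfl
  rw [LRel, ← Ideal.Quotient.eq_zero_iff_mem, map_sub, sub_eq_zero, hρ, map_sum]
  simp only [hρ]

variable {K' : Type*} [Field K'] (π : A →+* K') (s : K' → A) (hs : ∀ κ, π (s κ) = κ)
  (g : A) (hπg : π g ≠ 0)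

theorem spec_smul (a : A) (x : Laurent A n) :
    Ideal.Quotient.mk (Ideal.map (coeffRingHom π) I) (coeffRingHom π
        (AddMonoidAlgebra.single 0 a * x))
      = π a • Ideal.Quotient.mk (Ideal.map (coeffRingHom π) I) (coeffRingHom π x) := by
  rw [map_mul, coeffRingHom_single_s9, quot_single_zero_mul]

include s hs hπg in
theorem spec_span
    (hspan : ∀ β : Laurent A n, ∃ (k : ℕ) (c : Fin ℓ → A), LRel I b (g ^ k) β c) :
    Submodule.span K' (Set.range fun i =>
        Ideal.Quotient.mk (Ideal.map (coeffRingHom π) I) (coeffRingHom π (b i))) = ⊤ := by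
  classical
  have hψs : Function.Surjective (coeffRingHom (G := Fin n →₀ ℤ) π) :=
    coeffRingHom_surjective _ (fun κ => ⟨s κ, hs κ⟩)
  rw [eq_top_iff]
  rintro q -
  obtain ⟨x, rfl⟩ := (Ideal.Quotient.mk_surjective).comp hψs q
  obtain ⟨k, c, hk⟩ := hspan x
  have h0 : Ideal.Quotient.mk (Ideal.map (coeffRingHom π) I) (coeffRingHom π
      (AddMonoidAlgebra.single 0 (g ^ k) * x - ∑ i, AddMonoidAlgebra.single 0 (c i) * b i))
      = 0 := Ideal.Quotient.eq_zero_iff_mem.mpr (Ideal.mem_map_of_mem _ hk)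
  rw [map_sub, map_sum, map_sub, map_sum, sub_eq_zero] at h0
  simp only [spec_smul, map_pow] at h0
  show Ideal.Quotient.mk (Ideal.map (coeffRingHom π) I) (coeffRingHom π x) ∈ _
  have h2 : Ideal.Quotient.mk (Ideal.map (coeffRingHom π) I) (coeffRingHom π x)
      = (π g ^ k)⁻¹ • ((π g ^ k) •
        Ideal.Quotient.mk (Ideal.map (coeffRingHom π) I) (coeffRingHom π x)) := by
    rw [smul_smul, inv_mul_cancel₀ (pow_ne_zero _ hπg), one_smul]
  rw [h2, h0]
  exact Submodule.smul_mem _ _ (Submodule.sum_mem _ fun i _ =>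
    Submodule.smul_mem _ _ (Submodule.subset_span ⟨i, rfl⟩))

include s hs hπg in
theorem spec_indep
    (hspan : ∀ β : Laurent A n, ∃ (k : ℕ) (c : Fin ℓ → A), LRel I b (g ^ k) β c)
    (hinj : ∀ c : Fin ℓ → A, (∑ i, AddMonoidAlgebra.single 0 (c i) * b i) ∈ I → ∀ i, c i = 0) :
    LinearIndependent K' (fun i =>
      Ideal.Quotient.mk (Ideal.map (coeffRingHom π) I) (coeffRingHom π (b i))) := by
  classical
  have hψs : Function.Surjective (coeffRingHom (G := Fin n →₀ ℤ) π) :=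
    coeffRingHom_surjective _ (fun κ => ⟨s κ, hs κ⟩)
  rw [Fintype.linearIndependent_iff]
  intro lam hlam
  set wB := ∑ i, AddMonoidAlgebra.single (0 : Fin n →₀ ℤ) (s (lam i)) * b i with hwB
  have hw0 : Ideal.Quotient.mk (Ideal.map (coeffRingHom π) I) (coeffRingHom π wB) = 0 := by
    rw [hwB, map_sum, map_sum]
    rw [Finset.sum_congr rfl fun i _ => spec_smul I π (s (lam i)) (b i)]
    simp only [hs]
    exact hlam
  have hmem : coeffRingHom π wB ∈ Ideal.map (coeffRingHom π) I :=
    Ideal.Quotient.eq_zero_iff_mem.mp hw0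
  obtain ⟨w', hw'I, hww⟩ := (Ideal.mem_map_iff_of_surjective _ hψs).mp hmem
  set vv := wB - w' with hvvdef
  have hcoeff : ∀ e, π (vv.coeff e) = 0 := by
    intro e
    have hz : coeffRingHom π vv = 0 := by rw [hvvdef, map_sub, hww, sub_self]
    rw [← coeffRingHom_apply π vv e, hz, AddMonoidAlgebra.coeff_zero, Finsupp.coe_zero, Pi.zero_apply]
  choose ke ce hce using fun e : Fin n →₀ ℤ => hspan (AddMonoidAlgebra.single e (1 : A))
  set KK := vv.coeff.support.sup ke with hKK
  have hrel' : ∀ e ∈ vv.coeff.support, LRel I b (g ^ KK) (AddMonoidAlgebra.single e 1)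
      (fun i => g ^ (KK - ke e) * ce e i) := by
    intro e he
    have h4 := (hce e).mul_right (g ^ (KK - ke e))
    rwa [← pow_add, Nat.add_sub_cancel' (Finset.le_sup he)] at h4
  have hρ : ∀ (a : A) (x : Laurent A n), Ideal.Quotient.mk I (AddMonoidAlgebra.single 0 a * x)
      = (Ideal.Quotient.mk I).comp AddMonoidAlgebra.singleZeroRingHom a
          * Ideal.Quotient.mk I x := fun a x => by rw [map_mul]; rfl
  set ρ := (Ideal.Quotient.mk I).comp AddMonoidAlgebra.singleZeroRingHom with hρdef
  have hq1 : ρ (g ^ KK) * Ideal.Quotient.mk I wB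
      = ∑ i, ρ (g ^ KK * s (lam i)) * Ideal.Quotient.mk I (b i) := by
    rw [hwB, map_sum, Finset.mul_sum]
    exact Finset.sum_congr rfl fun i _ => by rw [hρ, map_mul]; ring
  have hveq : Ideal.Quotient.mk I wB = Ideal.Quotient.mk I vv := by
    rw [hvvdef, map_sub, Ideal.Quotient.eq_zero_iff_mem.mpr hw'I, sub_zero]
  have hdec : vv = ∑ e ∈ vv.coeff.support, AddMonoidAlgebra.single e (vv.coeff e) := by
    conv_lhs => rw [← AddMonoidAlgebra.sum_single vv]
    rfl
  have hq2 : ρ (g ^ KK) * Ideal.Quotient.mk I vv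
      = ∑ i, ρ (∑ e ∈ vv.coeff.support, vv.coeff e * (g ^ (KK - ke e) * ce e i))
          * Ideal.Quotient.mk I (b i) := by
    calc ρ (g ^ KK) * Ideal.Quotient.mk I vv
        = ∑ e ∈ vv.coeff.support, ρ (vv.coeff e)
            * (ρ (g ^ KK) * Ideal.Quotient.mk I (AddMonoidAlgebra.single e 1)) := by
          conv_lhs => rw [hdec]
          rw [map_sum, Finset.mul_sum]
          refine Finset.sum_congr rfl fun e he => ?_
          have h6 : (AddMonoidAlgebra.single e (vv.coeff e) : Laurent A n)
              = AddMonoidAlgebra.single 0 (vv.coeff e) * AddMonoidAlgebra.single e 1 := by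
            rw [AddMonoidAlgebra.single_mul_single, zero_add, mul_one]
          rw [h6, hρ]
          ring
      _ = ∑ e ∈ vv.coeff.support, ρ (vv.coeff e)
            * (∑ i, ρ (g ^ (KK - ke e) * ce e i) * Ideal.Quotient.mk I (b i)) := by
          refine Finset.sum_congr rfl fun e he => ?_
          rw [(lrel_iff I b _ _ _).mp (hrel' e he)]
      _ = ∑ i, ρ (∑ e ∈ vv.coeff.support, vv.coeff e * (g ^ (KK - ke e) * ce e i))
            * Ideal.Quotient.mk I (b i) := by
          simp only [map_sum, map_mul, Finset.mul_sum, Finset.sum_mul]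
          rw [Finset.sum_comm]
          exact Finset.sum_congr rfl fun i _ => Finset.sum_congr rfl fun e _ => by ring
  have hcomb : ∑ i, ρ (g ^ KK * s (lam i)
        - ∑ e ∈ vv.coeff.support, vv.coeff e * (g ^ (KK - ke e) * ce e i))
      * Ideal.Quotient.mk I (b i) = 0 := by
    simp only [map_sub, sub_mul, Finset.sum_sub_distrib]
    rw [← hq1, ← hq2, hveq, sub_self]
  have hImem : (∑ i, AddMonoidAlgebra.single (0 : Fin n →₀ ℤ) (g ^ KK * s (lam i)
        - ∑ e ∈ vv.coeff.support, vv.coeff e * (g ^ (KK - ke e) * ce e i)) * b i) ∈ I := by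
    rw [← Ideal.Quotient.eq_zero_iff_mem, map_sum]
    rw [Finset.sum_congr rfl fun i _ => hρ _ _]
    exact hcomb
  have hzero := hinj _ hImem
  intro i
  have hz := hzero i
  have hsum0 : π (∑ e ∈ vv.coeff.support, vv.coeff e * (g ^ (KK - ke e) * ce e i)) = 0 := by
    rw [map_sum]
    exact Finset.sum_eq_zero fun e _ => by rw [map_mul, hcoeff e, zero_mul]
  have hz' : π g ^ KK * lam i = 0 := by
    have h5 := congrArg π (sub_eq_zero.mp hz)
    rw [map_mul, map_pow, hs, hsum0] at h5
    exact h5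
  exact (mul_eq_zero.mp hz').resolve_left (pow_ne_zero _ hπg)

end SpecSide

set_option maxHeartbeats 1600000 in
set_option synthInstance.maxHeartbeats 400000 in
/-- If `I` is generically zero-dimensional, there is a nonzero polynomial
`g ∈ K[a₁,…,a_m]` such that for every choice of parameters `P` with `g(P) ≠ 0`, the root
count of the specialization `I_P` equals the generic root count. -/
theorem statement9 {K : Type*} [Field K] [IsAlgClosed K] [CharZero K] {m n : ℕ}
    (I : Ideal (Param K (Fin m) n)) (h : genericRootCount I < Cardinal.aleph0) :
    ∃ g : MvPolynomial (Fin m) K, g ≠ 0 ∧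
      ∀ P : Fin m → K, MvPolynomial.eval P g ≠ 0 →
        Module.rank K (Laurent K n ⧸ specialization I P) = genericRootCount I := by
  classical
  unfold genericRootCount at h ⊢
  have hFin : Module.Finite (RatFF K (Fin m))
      (Laurent (RatFF K (Fin m)) n ⧸ genericSpec I) :=
    IsNoetherian.iff_fg.mp (IsNoetherian.iff_rank_lt_aleph0.mpr h)
  set ℓ := Module.finrank (RatFF K (Fin m))
    (Laurent (RatFF K (Fin m)) n ⧸ genericSpec I) with hldef
  have hcard : (ℓ : Cardinal) = Module.rank (RatFF K (Fin m))
      (Laurent (RatFF K (Fin m)) n ⧸ genericSpec I) := Module.finrank_eq_rank _ _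
  let v₀ : Module.Basis (Fin ℓ) (RatFF K (Fin m))
      (Laurent (RatFF K (Fin m)) n ⧸ genericSpec I) := Module.finBasis _ _
  have hlift : ∀ i : Fin ℓ, ∃ (d : MvPolynomial (Fin m) K) (β : Param K (Fin m) n), d ≠ 0 ∧
      Ideal.Quotient.mk (genericSpec I)
        (coeffRingHom (algebraMap (MvPolynomial (Fin m) K) (RatFF K (Fin m))) β)
      = algebraMap (MvPolynomial (Fin m) K) (RatFF K (Fin m)) d • v₀ i := by
    intro i
    obtain ⟨z, hz⟩ := Ideal.Quotient.mk_surjective (v₀ i)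
    obtain ⟨d, β, hd, hβ⟩ := exists_denominator (A := MvPolynomial (Fin m) K)
      (G := Fin n →₀ ℤ) z
    refine ⟨d, β, hd, ?_⟩
    rw [← hβ, quot_single_zero_mul, hz]
  choose dd bb hdd hbb using hlift
  have hu : ∀ i, IsUnit (algebraMap (MvPolynomial (Fin m) K) (RatFF K (Fin m)) (dd i)) :=
    fun i => isUnit_iff_ne_zero.mpr
      ((map_ne_zero_iff _ (IsFractionRing.injective _ _)).mpr (hdd i))
  let v := v₀.unitsSMul (fun i => (hu i).unit)
  have hv : ∀ i, v i = Ideal.Quotient.mk (genericSpec I)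
      (coeffRingHom (algebraMap (MvPolynomial (Fin m) K) (RatFF K (Fin m))) (bb i)) := by
    intro i
    rw [show v i = (hu i).unit • v₀ i from Module.Basis.unitsSMul_apply i]
    rw [Units.smul_def, IsUnit.unit_spec, hbb i]
  have hinj := generic_inj I bb v hv
  have hrelE := generic_rel I bb v hv
  choose dβ hdβ0 cβ hcβ using hrelE
  obtain ⟨g, hg0, hdvd1, hdvdp, hdvdm⟩ : ∃ g : MvPolynomial (Fin m) K, g ≠ 0 ∧ dβ 1 ∣ g ∧
      (∀ (j : Fin n) (i : Fin ℓ),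
        dβ (AddMonoidAlgebra.single (Finsupp.single j (1 : ℤ)) 1 * bb i) ∣ g) ∧
      (∀ (j : Fin n) (i : Fin ℓ),
        dβ (AddMonoidAlgebra.single (Finsupp.single j (-1 : ℤ)) 1 * bb i) ∣ g) := by
    refine ⟨dβ 1
        * (∏ j : Fin n, ∏ i : Fin ℓ,
            dβ (AddMonoidAlgebra.single (Finsupp.single j (1 : ℤ)) 1 * bb i))
        * (∏ j : Fin n, ∏ i : Fin ℓ,
            dβ (AddMonoidAlgebra.single (Finsupp.single j (-1 : ℤ)) 1 * bb i)),
      ?_, ?_, ?_, ?_⟩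
    · exact mul_ne_zero (mul_ne_zero (hdβ0 1)
        (Finset.prod_ne_zero_iff.mpr fun j _ =>
          Finset.prod_ne_zero_iff.mpr fun i _ => hdβ0 _))
        (Finset.prod_ne_zero_iff.mpr fun j _ =>
          Finset.prod_ne_zero_iff.mpr fun i _ => hdβ0 _)
    · exact (dvd_mul_right (dβ 1) _).mul_right _
    · intro j i
      exact (((Finset.dvd_prod_of_mem _ (Finset.mem_univ i)).trans
        (Finset.dvd_prod_of_mem
          (fun j => ∏ i : Fin ℓ,
            dβ (AddMonoidAlgebra.single (Finsupp.single j (1 : ℤ)) 1 * bb i))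
          (Finset.mem_univ j))).mul_left (dβ 1)).mul_right _
    · intro j i
      exact ((Finset.dvd_prod_of_mem _ (Finset.mem_univ i)).trans
        (Finset.dvd_prod_of_mem
          (fun j => ∏ i : Fin ℓ,
            dβ (AddMonoidAlgebra.single (Finsupp.single j (-1 : ℤ)) 1 * bb i))
          (Finset.mem_univ j))).mul_left _
  have hspan : ∀ β, ∃ (k : ℕ) (c : Fin ℓ → _), LRel I bb (g ^ k) β c :=
    exists_rel_pow I bb g ((hcβ 1).of_dvd hdvd1)
      (fun j i => (hcβ _).of_dvd (hdvdp j i)) (fun j i => (hcβ _).of_dvd (hdvdm j i))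
  refine ⟨g, hg0, ?_⟩
  intro P hP
  have hsP : Submodule.span K (Set.range fun i =>
      Ideal.Quotient.mk (Ideal.map (coeffRingHom (MvPolynomial.eval P)) I)
        (coeffRingHom (MvPolynomial.eval P) (bb i))) = ⊤ :=
    spec_span I bb (MvPolynomial.eval P) MvPolynomial.C
      (fun κ => MvPolynomial.eval_C κ) g hP hspan
  have hiP : LinearIndependent K (fun i =>
      Ideal.Quotient.mk (Ideal.map (coeffRingHom (MvPolynomial.eval P)) I)
        (coeffRingHom (MvPolynomial.eval P) (bb i))) :=
    spec_indep I bb (MvPolynomial.eval P) MvPolynomial.C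
      (fun κ => MvPolynomial.eval_C κ) g hP hspan hinj
  let bas : Module.Basis (Fin ℓ) K (Laurent K n ⧸ specialization I P) := Module.Basis.mk hiP hsP.ge
  rw [rank_eq_card_basis bas, ← hcard, Fintype.card_fin]
end

section
/- Let K be a field equipped with an additively written valuation on its unit group, i.e., a group homomorphism val : Kˣ → (ℝ, +) such that val(a + b) ≥ min(val(a), val(b)) whenever a, b and a + b are all nonzero, together with a splitting: a group homomorphism s : (ℚ, +) → (Kˣ, ·) with val(s(q)) = q for all q ∈ ℚ. For v = (v₁,…,v_m) ∈ ℚ^m and P = (P₁,…,P_m) ∈ (Kˣ)^m write t^v·P := (s(v₁)P₁, …, s(v_m)P_m) ∈ K^m. Let X ⊆ K^m be the zero locus of an ideal J ⊆ K[a₁,…,a_m] with J ≠ 0 (so X is a proper Zariski-closed subset contained in the vanishing set of some nonzero polynomial). Then there exists a dense open subset U ⊆ ℝ^m (in the Euclidean topology) such that t^v·P ∉ X for every v ∈ ℚ^m ∩ U; in other words, t^v·P ∉ X for generic v ∈ ℚ^m. -/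
open Finset MvPolynomial

section Aux

variable {K : Type*} [Field K] (val : Kˣ → ℝ)
  (hval_mul : ∀ a b : Kˣ, val (a * b) = val a + val b)
  (hval_add : ∀ a b c : Kˣ, (a : K) + (b : K) = (c : K) → min (val a) (val b) ≤ val c)

include hval_mul

lemma aux_val_one : val 1 = 0 := by
  have := hval_mul 1 1
  simp only [mul_one] at this
  linarith

lemma aux_val_neg (a : Kˣ) : val (-a) = val a := by
  have h1 : val ((-1 : Kˣ) * (-1)) = val (-1) + val (-1) := hval_mul _ _
  have h2 : ((-1 : Kˣ) * (-1)) = 1 := by simp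
  rw [h2, aux_val_one val hval_mul] at h1
  have hneg1 : val (-1 : Kˣ) = 0 := by linarith
  have : -a = -1 * a := by simp
  rw [this, hval_mul, hneg1, zero_add]

lemma aux_val_prod {ι : Type*} (g : ι → Kˣ) (T : Finset ι) :
    val (∏ i ∈ T, g i) = ∑ i ∈ T, val (g i) := by
  classical
  induction T using Finset.induction with
  | empty => simpa using aux_val_one val hval_mul
  | insert _ _ h IH =>
    rw [Finset.prod_insert h, Finset.sum_insert h, hval_mul, IH]

lemma aux_val_pow (x : Kˣ) (n : ℕ) : val (x ^ n) = (n : ℝ) * val x := by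
  induction n with
  | zero => simpa using aux_val_one val hval_mul
  | succ n IH =>
    rw [pow_succ, hval_mul, IH]
    push_cast
    ring

include hval_add

lemma aux_two (a b : Kˣ) (h : val a ≠ val b) :
    ∃ c : Kˣ, (c : K) = (a : K) + b ∧ val c = min (val a) (val b) := by
  have hne : (a : K) + (b : K) ≠ 0 := by
    intro h0
    have hba : b = -a := Units.ext (by rw [Units.val_neg]; linear_combination h0)
    rw [hba, aux_val_neg val hval_mul] at h
    exact h rfl
  refine ⟨Units.mk0 _ hne, rfl, ?_⟩
  set c : Kˣ := Units.mk0 _ hne with hcdef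
  have hc : (a : K) + (b : K) = (c : K) := rfl
  have h1 : min (val a) (val b) ≤ val c := hval_add a b c hc
  have h2 : (c : K) + ((-b : Kˣ) : K) = (a : K) := by
    rw [Units.val_neg, ← hc]; ring
  have h3 : (c : K) + ((-a : Kˣ) : K) = (b : K) := by
    rw [Units.val_neg, ← hc]; ring
  have h2' := hval_add c (-b) a h2
  have h3' := hval_add c (-a) b h3
  rw [aux_val_neg val hval_mul] at h2' h3'
  rcases lt_or_gt_of_ne h with hab | hab
  · have hca : val c ≤ val a := by
      rcases min_le_iff.mp h2' with h' | h'
      · exact h'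
      · linarith
    rw [min_eq_left hab.le] at h1 ⊢
    linarith
  · have hcb : val c ≤ val b := by
      rcases min_le_iff.mp h3' with h' | h'
      · exact h'
      · linarith
    rw [min_eq_right hab.le] at h1 ⊢
    linarith

lemma aux_sum {ι : Type*} (g : ι → Kˣ) (T : Finset ι) (hT : T.Nonempty)
    (hinj : ∀ i ∈ T, ∀ j ∈ T, val (g i) = val (g j) → i = j) :
    ∃ c : Kˣ, (c : K) = ∑ i ∈ T, (g i : K) ∧
      val c = T.inf' hT fun i => val (g i) := by
  classical
  revert hinj
  induction hT using Finset.Nonempty.cons_induction with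
  | singleton i => exact fun _ => ⟨g i, by simp, by simp⟩
  | cons a T' ha hT' IH =>
    intro hinj
    obtain ⟨c', hc', hv'⟩ := IH fun i hi j hj =>
      hinj i (mem_cons_of_mem hi) j (mem_cons_of_mem hj)
    obtain ⟨i₀, hi₀, hmin⟩ := Finset.exists_mem_eq_inf' hT' fun i => val (g i)
    have hne : val (g a) ≠ val c' := by
      rw [hv', hmin]
      intro hEq
      exact ha (hinj a (mem_cons_self _ _) i₀ (mem_cons_of_mem hi₀) hEq ▸ hi₀)
    obtain ⟨c, hc, hvc⟩ := aux_two val hval_mul hval_add (g a) c' hne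
    refine ⟨c, by rw [Finset.sum_cons, hc, hc'], ?_⟩
    rw [hvc, hv', Finset.inf'_cons]

end Aux

lemma units_val_prod {M ι : Type*} [CommMonoid M] (g : ι → Mˣ) (T : Finset ι) :
    ((∏ i ∈ T, g i : Mˣ) : M) = ∏ i ∈ T, (g i : M) :=
  map_prod (Units.coeHom M) g T

lemma aux_open_affine {m : ℕ} (c : ℝ) (a : Fin m → ℝ) :
    IsOpen {w : Fin m → ℝ | c + ∑ i, a i * w i ≠ 0} := by
  have hcont : Continuous fun w : Fin m → ℝ => c + ∑ i, a i * w i :=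
    continuous_const.add <| continuous_finset_sum _ fun i _ =>
      continuous_const.mul (continuous_apply i)
  exact IsOpen.preimage hcont isOpen_compl_singleton

lemma aux_dense_affine {m : ℕ} (c : ℝ) (a : Fin m → ℝ) (j : Fin m) (hj : a j ≠ 0) :
    Dense {w : Fin m → ℝ | c + ∑ i, a i * w i ≠ 0} := by
  rw [Metric.dense_iff]
  intro x r hr
  have key : ∀ t : ℝ, ∑ i, a i * (Function.update x j (x j + t)) i
      = (∑ i, a i * x i) + a j * t := by
    intro t
    have h1 : ∀ i ∈ Finset.univ (α := Fin m), a i * (Function.update x j (x j + t)) i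
        = a i * x i + (if i = j then a j * t else 0) := by
      intro i _
      by_cases h : i = j
      · subst h; rw [Function.update_self]; simp; ring
      · rw [Function.update_of_ne h]; simp [h]
    rw [Finset.sum_congr rfl h1, Finset.sum_add_distrib, Finset.sum_ite_eq' Finset.univ j]
    simp
  have hmem : ∀ t : ℝ, |t| < r → Function.update x j (x j + t) ∈ Metric.ball x r := by
    intro t ht
    rw [Metric.mem_ball, dist_pi_lt_iff hr]
    intro i
    by_cases h : i = j
    · subst h
      rw [Function.update_self, Real.dist_eq, add_sub_cancel_left]
      exact ht
    · rw [Function.update_of_ne h]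
      simpa using hr
  by_cases h0 : c + ((∑ i, a i * x i) + a j * (r / 2)) = 0
  · refine ⟨Function.update x j (x j + r / 4), hmem _ (by rw [abs_of_pos (by linarith)]; linarith), ?_⟩
    simp only [Set.mem_setOf_eq, key]
    intro hEq
    have : a j * (r / 4) = 0 := by linarith
    rcases mul_eq_zero.mp this with h | h
    · exact hj h
    · linarith
  · exact ⟨Function.update x j (x j + r / 2), hmem _ (by rw [abs_of_pos (by linarith)]; linarith),
      by simp only [Set.mem_setOf_eq, key]; exact h0⟩

/-- **avoidance lemma.** Let `K` be a field with an additively written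
valuation `val : Kˣ → ℝ` (a group homomorphism satisfying the ultrametric inequality on
sums that stay nonzero) together with a splitting `s : ℚ → Kˣ` of the valuation. If
`X ⊆ K^m` is the zero locus of a nonzero ideal `J ⊆ K[a₁,…,a_m]` and `P ∈ (Kˣ)^m`, then
`t^v·P := (s(v₁)P₁,…,s(v_m)P_m) ∉ X` for all rational `v` in some dense open subset of
`ℝ^m`, i.e. for generic `v ∈ ℚ^m`. -/
theorem statement10 {K : Type*} [Field K]
    (val : Kˣ → ℝ) (hval_mul : ∀ a b : Kˣ, val (a * b) = val a + val b)
    (hval_add : ∀ a b c : Kˣ, (a : K) + (b : K) = (c : K) → min (val a) (val b) ≤ val c)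
    (s : ℚ → Kˣ) (hs_mul : ∀ p q : ℚ, s (p + q) = s p * s q)
    (hs_split : ∀ q : ℚ, val (s q) = (q : ℝ))
    {m : ℕ} (J : Ideal (MvPolynomial (Fin m) K)) (hJ : J ≠ ⊥) (P : Fin m → Kˣ) :
    ∃ U : Set (Fin m → ℝ), IsOpen U ∧ Dense U ∧
      ∀ v : Fin m → ℚ, (fun i => (v i : ℝ)) ∈ U →
        (fun i => (s (v i) : K) * (P i : K)) ∉
          {Q : Fin m → K | ∀ f ∈ J, MvPolynomial.eval Q f = 0} := by
  classical
  obtain ⟨f, hfJ, hf0⟩ := Submodule.exists_mem_ne_zero_of_ne_bot hJ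
  set S : Finset (Fin m →₀ ℕ) := f.support with hSdef
  have hSne : S.Nonempty := MvPolynomial.support_nonempty.mpr hf0
  set cu : (Fin m →₀ ℕ) → Kˣ := fun d =>
    if h : MvPolynomial.coeff d f = 0 then 1 else Units.mk0 _ h with hcudef
  set A : (Fin m →₀ ℕ) → ℝ := fun d => val (cu d) + ∑ i, (d i : ℝ) * val (P i) with hAdef
  set L : (Fin m →₀ ℕ) → (Fin m → ℝ) → ℝ := fun d w => A d + ∑ i, (d i : ℝ) * w i
    with hLdef
  have hLsub : ∀ (d e : Fin m →₀ ℕ) (w : Fin m → ℝ),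
      (A d - A e) + ∑ i, ((d i : ℝ) - (e i : ℝ)) * w i = L d w - L e w := by
    intro d e w
    simp only [hLdef, sub_mul, Finset.sum_sub_distrib]
    ring
  have hset : ∀ d e : Fin m →₀ ℕ, {w : Fin m → ℝ | L d w ≠ L e w}
      = {w : Fin m → ℝ | (A d - A e) + ∑ i, ((d i : ℝ) - (e i : ℝ)) * w i ≠ 0} := by
    intro d e
    ext w
    simp only [Set.mem_setOf_eq, hLsub d e w, sub_ne_zero]
  set pairs : Finset ((Fin m →₀ ℕ) × (Fin m →₀ ℕ)) :=
    (S ×ˢ S).filter (fun p => p.1 ≠ p.2) with hpairsdef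
  refine ⟨⋂ p ∈ pairs, {w | L p.1 w ≠ L p.2 w}, ?_, ?_, ?_⟩
  · exact isOpen_biInter_finset fun p _ => by
      rw [hset]; exact aux_open_affine _ _
  · refine dense_biInter_of_isOpen (fun p _ => by rw [hset]; exact aux_open_affine _ _)
      pairs.countable_toSet (fun p hp => ?_)
    rw [hset]
    have hne : p.1 ≠ p.2 := (Finset.mem_filter.mp hp).2
    obtain ⟨j, hj⟩ := Finsupp.ne_iff.mp hne
    refine aux_dense_affine _ _ j ?_
    rw [sub_ne_zero]
    exact_mod_cast fun h => hj (Nat.cast_injective h)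
  · intro v hv hmem
    set g : (Fin m →₀ ℕ) → Kˣ := fun d =>
      cu d * ((∏ i, s (v i) ^ d i) * ∏ i, P i ^ d i) with hgdef
    have hval_g : ∀ d : Fin m →₀ ℕ, val (g d) = L d fun i => (v i : ℝ) := by
      intro d
      simp only [hgdef, hLdef, hAdef]
      rw [hval_mul, hval_mul, aux_val_prod val hval_mul, aux_val_prod val hval_mul]
      have h1 : ∀ i ∈ Finset.univ (α := Fin m),
          val (s (v i) ^ d i) = (d i : ℝ) * (v i : ℝ) := fun i _ => by
        rw [aux_val_pow val hval_mul, hs_split]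
      have h2 : ∀ i ∈ Finset.univ (α := Fin m),
          val (P i ^ d i) = (d i : ℝ) * val (P i) := fun i _ => by
        rw [aux_val_pow val hval_mul]
      rw [Finset.sum_congr rfl h1, Finset.sum_congr rfl h2]
      ring
    have hinj : ∀ d ∈ S, ∀ e ∈ S, val (g d) = val (g e) → d = e := by
      intro d hd e he hEq
      by_contra hne
      have hp : (d, e) ∈ pairs := Finset.mem_filter.mpr ⟨Finset.mem_product.mpr ⟨hd, he⟩, hne⟩
      have := Set.mem_iInter₂.mp hv (d, e) hp
      simp only [Set.mem_setOf_eq] at this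
      rw [← hval_g, ← hval_g] at this
      exact this hEq
    obtain ⟨c, hc, -⟩ := aux_sum val hval_mul hval_add g S hSne hinj
    have hcoe : ∀ d ∈ S, (g d : K)
        = MvPolynomial.coeff d f * ∏ i, ((s (v i) : K) * (P i : K)) ^ d i := by
      intro d hd
      have hcd : MvPolynomial.coeff d f ≠ 0 := MvPolynomial.mem_support_iff.mp hd
      simp only [hgdef, hcudef, dif_neg hcd, Units.val_mul]
      rw [units_val_prod, units_val_prod, ← Finset.prod_mul_distrib]
      simp only [Units.val_pow_eq_pow_val, Units.val_mk0, ← mul_pow]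
    have heval : MvPolynomial.eval (fun i => (s (v i) : K) * (P i : K)) f
        = ∑ d ∈ S, (g d : K) := by
      rw [MvPolynomial.eval_eq']
      exact Finset.sum_congr rfl fun d hd => (hcoe d hd).symm
    have h0 : MvPolynomial.eval (fun i => (s (v i) : K) * (P i : K)) f = 0 := hmem f hfJ
    rw [heval, ← hc] at h0
    exact c.ne_zero h0
end
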